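/- If (X, ω_X) is a weighted fan of dimension k in V and (Y, ω_Y) is a refinement of (X, ω_X), then (X, ω_X) is a tropical fan (satisfies the balancing condition) if and only if (Y, ω_Y) is a tropical fan. -/

import Mathlib

open scoped BigOperators Pointwise Classical

namespace TropInt

/-! ### Basic integral-linear algebra helpers -/

/-- The real vector associated to an integral (lattice) vector. -/
def toReal {N : ℕ} (v : Fin N → ℤ) : Fin N → ℝ := fun i => (v i : ℝ)

/-- Evaluation of an integral linear form on a point of `ℝ^N`. -/
def evalForm {N : ℕ} (l : Fin N → ℤ) (x : Fin N → ℝ) : ℝ := ∑ i, (l i : ℝ) * x i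

/-- Evaluation of an integral linear form on a lattice vector. -/
def pairZ {N : ℕ} (l v : Fin N → ℤ) : ℤ := ∑ i, l i * v i

/-- A rational polyhedron in `ℝ^N`: a set cut out by finitely many integral affine
inequalities. -/
def IsRationalPolyhedron {N : ℕ} (σ : Set (Fin N → ℝ)) : Prop :=
  ∃ S : Finset ((Fin N → ℤ) × ℤ), σ = {x | ∀ p ∈ S, evalForm p.1 x ≤ (p.2 : ℝ)}

/-- A rational cone in `ℝ^N`: a set cut out by finitely many integral linear equalities
and inequalities. -/
def IsRationalCone {N : ℕ} (σ : Set (Fin N → ℝ)) : Prop :=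
  ∃ E I : Finset (Fin N → ℤ),
    σ = {x | (∀ l ∈ E, evalForm l x = 0) ∧ ∀ l ∈ I, 0 ≤ evalForm l x}

/-- The dimension of a polyhedron (resp. cone) `σ`, i.e. the dimension of the smallest
affine subspace `V_σ` containing it. -/
noncomputable def polyDim {N : ℕ} (σ : Set (Fin N → ℝ)) : ℕ :=
  Module.finrank ℝ (vectorSpan ℝ σ)

/-! ### Weighted rational polyhedral complexes (in particular: weighted fans) in `ℝ^N` -/

/-- A weighted rational polyhedral complex of dimension `dim` in `ℝ^N`:
a finite collection of rational polyhedra, closed under (nonempty) intersections, such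
that every polyhedron is the disjoint union of the relative interiors of its faces in
the complex, pure-dimensional, together with an integral weight function supported on
the facets (the `dim`-dimensional polyhedra).
If all polyhedra are cones (see `WComplex.IsFan`) this is precisely a weighted fan. -/
structure WComplex (N : ℕ) where
  dim : ℕ
  polys : Set (Set (Fin N → ℝ))
  finite : polys.Finite
  nonempty_mem : ∀ σ ∈ polys, σ.Nonempty
  rational : ∀ σ ∈ polys, IsRationalPolyhedron σ
  inter_mem : ∀ σ ∈ polys, ∀ τ ∈ polys, (σ ∩ τ).Nonempty → σ ∩ τ ∈ polys
  decomp : ∀ σ ∈ polys, ∀ x ∈ σ, ∃! τ, τ ∈ polys ∧ τ ⊆ σ ∧ x ∈ intrinsicInterior ℝ τ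
  pure : ∀ σ ∈ polys, polyDim σ ≤ dim ∧ ∃ τ ∈ polys, σ ⊆ τ ∧ polyDim τ = dim
  weight : Set (Fin N → ℝ) → ℤ
  weight_zero : ∀ σ, ¬(σ ∈ polys ∧ polyDim σ = dim) → weight σ = 0

namespace WComplex

variable {N : ℕ}

/-- The support `|X|` of a complex. -/
def support (X : WComplex N) : Set (Fin N → ℝ) := ⋃₀ X.polys

noncomputable def polysFinset (X : WComplex N) : Finset (Set (Fin N → ℝ)) :=
  X.finite.toFinset

/-- The facets (maximal-dimensional polyhedra) of `X`. -/
def facets (X : WComplex N) : Set (Set (Fin N → ℝ)) :=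
  {σ | σ ∈ X.polys ∧ polyDim σ = X.dim}

/-- The facets of `X` having `τ` as a proper face. -/
noncomputable def facetsAbove (X : WComplex N) (τ : Set (Fin N → ℝ)) :
    Finset (Set (Fin N → ℝ)) :=
  X.polysFinset.filter fun σ => polyDim σ = X.dim ∧ τ ⊆ σ ∧ τ ≠ σ

/-- `X` is a (weighted) fan if all of its polyhedra are rational cones. -/
def IsFan (X : WComplex N) : Prop := ∀ σ ∈ X.polys, IsRationalCone σ

end WComplex

/-- `v` is a representative in the lattice `ℤ^N` of the primitive normal vector
`u_{σ/τ}` of `σ` relative to its codimension-one face `τ`: it lies in `Λ_σ`, it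
generates `Λ_σ/Λ_τ`, and it points from `τ` towards `σ`. -/
def IsPrimitiveNormal {N : ℕ} (τ σ : Set (Fin N → ℝ)) (v : Fin N → ℤ) : Prop :=
  toReal v ∈ vectorSpan ℝ σ ∧
  (∀ w : Fin N → ℤ, toReal w ∈ vectorSpan ℝ σ →
    ∃ (a : ℤ) (u : Fin N → ℤ), toReal u ∈ vectorSpan ℝ τ ∧ w = a • v + u) ∧
  ∃ (l : Fin N → ℤ) (c : ℝ),
    (∀ x ∈ τ, evalForm l x = c) ∧ (∀ x ∈ σ, c ≤ evalForm l x) ∧ 0 < pairZ l v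

namespace WComplex

variable {N : ℕ}

/-- The balancing condition: around every codimension-one polyhedron `τ` the weighted
sum of (representatives of the) primitive normal vectors of the adjacent facets lies
in `V_τ`.  A weighted fan satisfying this condition is a tropical fan. -/
def IsTropical (X : WComplex N) : Prop :=
  ∀ τ ∈ X.polys, polyDim τ + 1 = X.dim →
    ∃ v : Set (Fin N → ℝ) → (Fin N → ℤ),
      (∀ σ ∈ X.facetsAbove τ, IsPrimitiveNormal τ σ (v σ)) ∧
      toReal (∑ σ ∈ X.facetsAbove τ, X.weight σ • v σ) ∈ vectorSpan ℝ τ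

/-- The polyhedra of the non-zero part `X*` of `X`. -/
def starPolys (X : WComplex N) : Set (Set (Fin N → ℝ)) :=
  {τ | τ ∈ X.polys ∧ ∃ σ ∈ X.polys, polyDim σ = X.dim ∧ X.weight σ ≠ 0 ∧ τ ⊆ σ}

/-- The support `|X*|` of the non-zero part of `X`. -/
def starSupport (X : WComplex N) : Set (Fin N → ℝ) := ⋃₀ X.starPolys

end WComplex

/-- `Y` is a refinement of `X`: the non-zero part of `Y` is a subcomplex (subfan) of the
non-zero part of `X` with the same support, and each facet of `Y*` inherits the weight of
the (inclusion-)minimal polyhedron of `X*` containing it. -/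
def Refines {N : ℕ} (Y X : WComplex N) : Prop :=
  (∀ σ ∈ Y.starPolys, ∃ τ ∈ X.starPolys, σ ⊆ τ) ∧
  Y.starSupport = X.starSupport ∧
  ∀ σ ∈ Y.starPolys, polyDim σ = Y.dim →
    ∀ τ, (τ ∈ X.starPolys ∧ σ ⊆ τ ∧ ∀ τ' ∈ X.starPolys, σ ⊆ τ' → τ ⊆ τ') →
      Y.weight σ = X.weight τ

/-- Two weighted complexes are equivalent if they have a common refinement. -/
def PEquiv {N : ℕ} (X Y : WComplex N) : Prop := ∃ Z, Refines Z X ∧ Refines Z Y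

/-- Two weighted fans are equivalent if they have a common refinement (by a weighted fan). -/
def FanEquiv {N : ℕ} (X Y : WComplex N) : Prop :=
  ∃ Z, Z.IsFan ∧ Refines Z X ∧ Refines Z Y

/-- `S` represents the sum `X + Y`: after refining `X` and `Y` suitably (so that the
union of the two collections of polyhedra is again a complex), `S` is the union with
added weights. -/
def SumRepr {N : ℕ} (X Y S : WComplex N) : Prop :=
  ∃ X' Y' : WComplex N, Refines X' X ∧ Refines Y' Y ∧
    S.dim = X.dim ∧ S.polys = X'.polys ∪ Y'.polys ∧
    ∀ σ, S.weight σ = X'.weight σ + Y'.weight σ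

/-- The empty weighted complex, considered as having dimension `k`. -/
def emptyW (N k : ℕ) : WComplex N where
  dim := k
  polys := ∅
  finite := Set.finite_empty
  nonempty_mem := by intro σ hσ; exact absurd hσ (Set.notMem_empty σ)
  rational := by intro σ hσ; exact absurd hσ (Set.notMem_empty σ)
  inter_mem := by intro σ hσ; exact absurd hσ (Set.notMem_empty σ)
  decomp := by intro σ hσ; exact absurd hσ (Set.notMem_empty σ)
  pure := by intro σ hσ; exact absurd hσ (Set.notMem_empty σ)
  weight := fun _ => 0
  weight_zero := fun _ _ => rfl

/-- The weighted complex obtained from `X` by negating all weights. -/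
def WComplex.negW {N : ℕ} (X : WComplex N) : WComplex N where
  dim := X.dim
  polys := X.polys
  finite := X.finite
  nonempty_mem := X.nonempty_mem
  rational := X.rational
  inter_mem := X.inter_mem
  decomp := X.decomp
  pure := X.pure
  weight := fun σ => - X.weight σ
  weight_zero := fun σ h => by show -X.weight σ = 0; rw [X.weight_zero σ h]; ring

/-! ### Rational functions and associated Weil divisors -/

/-- `φ` is a (non-zero) rational function adapted to the complex `X`: it is continuous
on `|X|` and restricts to an integral affine-linear function on every polyhedron of `X`. -/
def AffineOnPolys {N : ℕ} (X : WComplex N) (φ : (Fin N → ℝ) → ℝ) : Prop :=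
  ContinuousOn φ X.support ∧
  ∀ σ ∈ X.polys, ∃ (l : Fin N → ℤ) (c : ℝ), ∀ x ∈ σ, φ x = evalForm l x + c

/-- The weight `ω_φ(τ)` of the codimension-one polyhedron `τ` in the Weil divisor of `φ`
equals `w`:  `w = ∑_{σ>τ} φ_σ(ω(σ)·v_{σ/τ}) − φ_τ(∑_{σ>τ} ω(σ)·v_{σ/τ})` for (any)
choices of representatives `v_{σ/τ}` of the primitive normal vectors and of the integral
linear parts `φ_σ`, `φ_τ` of `φ` on the polyhedra. -/
def WeilWeightEq {N : ℕ} (X : WComplex N) (φ : (Fin N → ℝ) → ℝ)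
    (τ : Set (Fin N → ℝ)) (w : ℤ) : Prop :=
  ∃ (v l : Set (Fin N → ℝ) → (Fin N → ℤ)) (lτ : Fin N → ℤ),
    (∀ σ ∈ X.facetsAbove τ, IsPrimitiveNormal τ σ (v σ) ∧
      ∃ c : ℝ, ∀ x ∈ σ, φ x = evalForm (l σ) x + c) ∧
    (∃ c : ℝ, ∀ x ∈ τ, φ x = evalForm lτ x + c) ∧
    w = (∑ σ ∈ X.facetsAbove τ, X.weight σ * pairZ (l σ) (v σ))
        - pairZ lτ (∑ σ ∈ X.facetsAbove τ, X.weight σ • v σ)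

/-- `F` represents the associated Weil divisor `div(φ) = φ·X`: for some representative
`X'` of the class of `X` on whose polyhedra `φ` is integral affine linear, `F` is the
codimension-one skeleton of `X'` equipped with the weights `ω_φ`. -/
def WeilRepr {N : ℕ} (X : WComplex N) (φ : (Fin N → ℝ) → ℝ) (F : WComplex N) : Prop :=
  F.dim + 1 = X.dim ∧
  ∃ X', Refines X' X ∧ X'.dim = X.dim ∧ AffineOnPolys X' φ ∧
    F.polys = {σ | σ ∈ X'.polys ∧ polyDim σ ≤ F.dim} ∧
    ∀ τ ∈ F.polys, polyDim τ = F.dim → WeilWeightEq X' φ τ (F.weight τ)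

/-- `U` is (relatively) open in `S`. -/
def RelOpenIn {γ : Type*} [TopologicalSpace γ] (S U : Set γ) : Prop :=
  ∃ O : Set γ, IsOpen O ∧ U ∩ S = O ∩ S


/-- The lattice `Λ_σ` of integral vectors in the linear space `V_σ` spanned by
(differences of points of) `σ`. -/
def dirLattice {M : ℕ} (σ : Set (Fin M → ℝ)) : AddSubgroup (Fin M → ℤ) where
  carrier := {v | toReal v ∈ vectorSpan ℝ σ}
  zero_mem' := by
    have h : toReal (0 : Fin M → ℤ) = 0 := by funext i; simp [toReal]
    simp only [Set.mem_setOf_eq, h]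
    exact Submodule.zero_mem _
  add_mem' := by
    intro a b ha hb
    have h : toReal (a + b) = toReal a + toReal b := by
      funext i; simp [toReal]
    simp only [Set.mem_setOf_eq, h]
    exact Submodule.add_mem _ ha hb
  neg_mem' := by
    intro a ha
    have h : toReal (-a) = -toReal a := by funext i; simp [toReal]
    simp only [Set.mem_setOf_eq, h]
    exact Submodule.neg_mem _ ha




section Aux
variable {N : ℕ}

/-- `evalForm` as a linear map. -/
noncomputable def evalFormL (l : Fin N → ℤ) : (Fin N → ℝ) →ₗ[ℝ] ℝ where
  toFun x := evalForm l x
  map_add' x y := by simp [evalForm, mul_add, Finset.sum_add_distrib]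
  map_smul' c x := by simp [evalForm, Finset.mul_sum, mul_left_comm]

@[simp] lemma evalFormL_apply (l : Fin N → ℤ) (x : Fin N → ℝ) :
    evalFormL l x = evalForm l x := rfl

lemma evalForm_toReal (l v : Fin N → ℤ) : evalForm l (toReal v) = (pairZ l v : ℝ) := by
  simp [evalForm, pairZ, toReal]

@[simp] lemma toReal_add (a b : Fin N → ℤ) : toReal (a + b) = toReal a + toReal b := by
  funext i; simp [toReal]

@[simp] lemma toReal_zero : toReal (0 : Fin N → ℤ) = 0 := by funext i; simp [toReal]

@[simp] lemma toReal_neg (a : Fin N → ℤ) : toReal (-a) = -toReal a := by funext i; simp [toReal]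

@[simp] lemma toReal_sub (a b : Fin N → ℤ) : toReal (a - b) = toReal a - toReal b := by
  funext i; simp [toReal]

@[simp] lemma toReal_intsmul (n : ℤ) (a : Fin N → ℤ) :
    toReal (n • a) = (n : ℝ) • toReal a := by
  funext i; simp [toReal]

lemma toReal_sum {α : Type*} (s : Finset α) (f : α → Fin N → ℤ) :
    toReal (∑ a ∈ s, f a) = ∑ a ∈ s, toReal (f a) := by
  classical
  induction s using Finset.induction with
  | empty => simp
  | insert _ _ h ih => simp [Finset.sum_insert h, ih]

/-- description of a rational cone -/
lemma IsRationalCone.mem_iff {σ : Set (Fin N → ℝ)} (h : IsRationalCone σ) :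
    ∃ E I : Finset (Fin N → ℤ),
      ∀ x, x ∈ σ ↔ ((∀ l ∈ E, evalForm l x = 0) ∧ ∀ l ∈ I, 0 ≤ evalForm l x) := by
  obtain ⟨E, I, rfl⟩ := h; exact ⟨E, I, fun x => Iff.rfl⟩

lemma IsRationalCone.zero_mem {σ : Set (Fin N → ℝ)} (h : IsRationalCone σ) : (0 : Fin N → ℝ) ∈ σ := by
  obtain ⟨E, I, rfl⟩ := h
  constructor <;> intro l hl <;> simp [evalForm]

lemma IsRationalCone.smul_mem {σ : Set (Fin N → ℝ)} (h : IsRationalCone σ) {c : ℝ} (hc : 0 ≤ c)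
    {x : Fin N → ℝ} (hx : x ∈ σ) : c • x ∈ σ := by
  obtain ⟨E, I, rfl⟩ := h
  obtain ⟨h1, h2⟩ := hx
  constructor
  · intro l hl
    have : evalForm l (c • x) = c * evalForm l x := (evalFormL l).map_smul c x
    rw [this, h1 l hl, mul_zero]
  · intro l hl
    have : evalForm l (c • x) = c * evalForm l x := (evalFormL l).map_smul c x
    rw [this]; exact mul_nonneg hc (h2 l hl)

lemma IsRationalCone.add_mem {σ : Set (Fin N → ℝ)} (h : IsRationalCone σ)
    {x y : Fin N → ℝ} (hx : x ∈ σ) (hy : y ∈ σ) : x + y ∈ σ := by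
  obtain ⟨E, I, rfl⟩ := h
  constructor
  · intro l hl
    have : evalForm l (x + y) = evalForm l x + evalForm l y := (evalFormL l).map_add x y
    rw [this, hx.1 l hl, hy.1 l hl, add_zero]
  · intro l hl
    have : evalForm l (x + y) = evalForm l x + evalForm l y := (evalFormL l).map_add x y
    rw [this]; exact add_nonneg (hx.2 l hl) (hy.2 l hl)

lemma IsRationalCone.convex {σ : Set (Fin N → ℝ)} (h : IsRationalCone σ) : Convex ℝ σ := by
  intro x hx y hy a b ha hb _
  exact h.add_mem (h.smul_mem ha hx) (h.smul_mem hb hy)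

lemma IsRationalCone.isClosed {σ : Set (Fin N → ℝ)} (h : IsRationalCone σ) : IsClosed σ := by
  obtain ⟨E, I, rfl⟩ := h
  have : {x : Fin N → ℝ | (∀ l ∈ E, evalForm l x = 0) ∧ ∀ l ∈ I, 0 ≤ evalForm l x}
      = (⋂ l ∈ E, {x | evalForm l x = 0}) ∩ ⋂ l ∈ I, {x | 0 ≤ evalForm l x} := by
    ext x; simp [Set.mem_iInter]
  rw [this]
  apply IsClosed.inter
  · exact isClosed_biInter fun l _ => isClosed_eq (evalFormL l).continuous_of_finiteDimensional
      continuous_const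
  · exact isClosed_biInter fun l _ => isClosed_le continuous_const
      (evalFormL l).continuous_of_finiteDimensional

/-- the linear span of a cone -/
lemma vectorSpan_eq_span {σ : Set (Fin N → ℝ)} (h0 : (0 : Fin N → ℝ) ∈ σ) :
    vectorSpan ℝ σ = Submodule.span ℝ σ := by
  apply le_antisymm
  · rw [vectorSpan_def, Submodule.span_le]
    rintro v ⟨a, ha, b, hb, rfl⟩
    exact sub_mem (Submodule.subset_span ha) (Submodule.subset_span hb)
  · rw [Submodule.span_le]
    intro a ha
    have := vsub_mem_vectorSpan ℝ ha h0
    simpa using this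

lemma subset_vectorSpan {σ : Set (Fin N → ℝ)} (h0 : (0 : Fin N → ℝ) ∈ σ) :
    σ ⊆ (vectorSpan ℝ σ : Set (Fin N → ℝ)) := by
  rw [vectorSpan_eq_span h0]
  exact Submodule.subset_span

lemma affineSpan_coe_eq {σ : Set (Fin N → ℝ)} (h0 : (0 : Fin N → ℝ) ∈ σ) :
    (affineSpan ℝ σ : Set (Fin N → ℝ)) = (vectorSpan ℝ σ : Set (Fin N → ℝ)) := by
  apply le_antisymm
  · have : affineSpan ℝ σ ≤ (vectorSpan ℝ σ).toAffineSubspace := by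
      rw [affineSpan_le]
      exact subset_vectorSpan h0
    exact this
  · intro v hv
    have h0' : (0 : Fin N → ℝ) ∈ affineSpan ℝ σ := subset_affineSpan ℝ σ h0
    have : v ∈ (affineSpan ℝ σ).direction := by
      rw [direction_affineSpan]; exact hv
    have := AffineSubspace.vadd_mem_of_mem_direction this h0'
    simpa using this


/-- characterization of the intrinsic interior via metric balls in the affine span -/
lemma mem_intrinsicInterior_iff {σ : Set (Fin N → ℝ)} {x : Fin N → ℝ} :
    x ∈ intrinsicInterior ℝ σ ↔
      x ∈ σ ∧ ∃ ε > 0, ∀ y ∈ (affineSpan ℝ σ : Set (Fin N → ℝ)), dist y x < ε → y ∈ σ := by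
  constructor
  · rintro ⟨xh, hxh, rfl⟩
    refine ⟨interior_subset (s := (Subtype.val ⁻¹' σ : Set (affineSpan ℝ σ))) hxh, ?_⟩
    rw [mem_interior_iff_mem_nhds, Metric.mem_nhds_iff] at hxh
    obtain ⟨ε, hε, hball⟩ := hxh
    refine ⟨ε, hε, fun y hy hdy => ?_⟩
    have : (⟨y, hy⟩ : affineSpan ℝ σ) ∈ Metric.ball xh ε := by
      rw [Metric.mem_ball, Subtype.dist_eq]; exact hdy
    exact hball this
  · rintro ⟨hxσ, ε, hε, h⟩
    have hx : x ∈ affineSpan ℝ σ := subset_affineSpan ℝ σ hxσ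
    refine ⟨⟨x, hx⟩, ?_, rfl⟩
    rw [mem_interior_iff_mem_nhds, Metric.mem_nhds_iff]
    refine ⟨ε, hε, fun y hy => ?_⟩
    rw [Metric.mem_ball, Subtype.dist_eq] at hy
    exact h y y.2 hy

/-- relative interior is relatively open -/
lemma intrinsicInterior_ball {σ : Set (Fin N → ℝ)} {x : Fin N → ℝ}
    (hx : x ∈ intrinsicInterior ℝ σ) :
    ∃ ε > 0, ∀ y ∈ (affineSpan ℝ σ : Set (Fin N → ℝ)), dist y x < ε →
      y ∈ intrinsicInterior ℝ σ := by
  obtain ⟨xh, hxh, rfl⟩ := hx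
  rw [mem_interior_iff_mem_nhds, Metric.mem_nhds_iff] at hxh
  obtain ⟨ε, hε, hball⟩ := hxh
  refine ⟨ε, hε, fun y hy hdy => ?_⟩
  refine ⟨⟨y, hy⟩, ?_, rfl⟩
  have hsub : Metric.ball xh ε ⊆ interior ((↑) ⁻¹' σ : Set (affineSpan ℝ σ)) :=
    interior_maximal hball Metric.isOpen_ball
  apply hsub
  rw [Metric.mem_ball, Subtype.dist_eq]; exact hdy

lemma intrinsicInterior_subset' {σ : Set (Fin N → ℝ)} :
    intrinsicInterior ℝ σ ⊆ σ := intrinsicInterior_subset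

/-- a linear functional nonneg on `σ`, vanishing at a relative interior point, vanishes on `σ` -/
lemma eq_zero_on_of_relint {σ : Set (Fin N → ℝ)} {f : (Fin N → ℝ) →ₗ[ℝ] ℝ} {x : Fin N → ℝ}
    (hf : ∀ y ∈ σ, 0 ≤ f y) (hx : x ∈ intrinsicInterior ℝ σ) (hx0 : f x = 0) :
    ∀ y ∈ σ, f y = 0 := by
  intro y hy
  rw [mem_intrinsicInterior_iff] at hx
  obtain ⟨hxσ, ε, hε, h⟩ := hx
  by_cases hxy : y = x
  · rw [hxy]; exact hx0
  -- consider z = x + t (x - y)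
  have hd : 0 < dist x y := dist_pos.2 fun h => hxy h.symm
  set t : ℝ := min (ε / (2 * dist x y)) 1 with ht
  have ht0 : 0 < t := lt_min (by positivity) one_pos
  set z : Fin N → ℝ := t • (x - y) + x with hz
  have hzmem : z ∈ affineSpan ℝ σ := by
    have hx' : x ∈ affineSpan ℝ σ := subset_affineSpan ℝ σ hxσ
    have hy' : y ∈ affineSpan ℝ σ := subset_affineSpan ℝ σ hy
    have := AffineSubspace.smul_vsub_vadd_mem (affineSpan ℝ σ) t hx' hy' hx'
    simpa [hz] using this
  have hzdist : dist z x < ε := by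
    have : dist z x = t * dist x y := by
      rw [dist_eq_norm, hz]
      simp only [add_sub_cancel_right]
      rw [norm_smul, Real.norm_eq_abs, abs_of_pos ht0, dist_eq_norm]
    rw [this]
    calc t * dist x y ≤ (ε / (2 * dist x y)) * dist x y := by
          apply mul_le_mul_of_nonneg_right (min_le_left _ _) hd.le
      _ = ε / 2 := by field_simp
      _ < ε := by linarith
  have hzσ : z ∈ σ := h z hzmem hzdist
  have h1 : 0 ≤ f z := hf z hzσ
  have h2 : f z = -(t * f y) := by
    rw [hz]
    simp [map_add, map_smul, map_sub, hx0]
  have hy0 : f y ≤ 0 := by nlinarith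
  exact le_antisymm hy0 (hf y hy)


/-- the rational-points density trick: denominator clearing. -/
lemma exists_int_rep (v : Fin N → ℚ) :
    ∃ (d : ℤ) (w : Fin N → ℤ), 0 < d ∧ ∀ i, (w i : ℚ) = d * v i := by
  classical
  refine ⟨∏ i, ((v i).den : ℤ), fun i => (v i).num * ((∏ j, ((v j).den : ℤ)) / ((v i).den : ℤ)),
    ?_, ?_⟩
  · apply Finset.prod_pos; intro i _; exact_mod_cast (v i).den_pos
  · intro i
    have hdvd : ((v i).den : ℤ) ∣ ∏ j, ((v j).den : ℤ) :=
      Finset.dvd_prod_of_mem _ (Finset.mem_univ i)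
    obtain ⟨c, hc⟩ := hdvd
    have hden : ((v i).den : ℤ) ≠ 0 := by exact_mod_cast (v i).den_nz
    have h1 : (v i).num * ((∏ j, ((v j).den : ℤ)) / ((v i).den : ℤ)) = (v i).num * c := by
      rw [hc, Int.mul_ediv_cancel_left _ hden]
    show (((v i).num * ((∏ j, ((v j).den : ℤ)) / ((v i).den : ℤ)) : ℤ) : ℚ) = _
    rw [h1, hc]
    push_cast
    rw [← Rat.mul_den_eq_num]
    ring

/-- the solution space of a finite system of integral linear forms. -/
noncomputable def solSpace (F : Finset (Fin N → ℤ)) : Submodule ℝ (Fin N → ℝ) :=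
  ⨅ l ∈ F, LinearMap.ker (evalFormL l)

lemma mem_solSpace {F : Finset (Fin N → ℤ)} {x : Fin N → ℝ} :
    x ∈ solSpace F ↔ ∀ l ∈ F, evalForm l x = 0 := by
  simp [solSpace, Submodule.mem_iInf, LinearMap.mem_ker]

/-- a real solution of an integral linear system is a real span of rational solutions. -/
lemma solSpace_eq_span_lattice (F : Finset (Fin N → ℤ)) :
    solSpace F = Submodule.span ℝ (toReal '' {v : Fin N → ℤ | toReal v ∈ solSpace F}) := by
  apply le_antisymm
  · -- hard direction
    intro x hx
    classical
    set Wq : Submodule ℚ ℝ := Submodule.span ℚ (Set.range x) with hWq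
    have hxW : ∀ i, x i ∈ Wq := fun i => Submodule.subset_span (Set.mem_range_self i)
    set xh : Fin N → Wq := fun i => ⟨x i, hxW i⟩ with hxh
    set B := Module.Basis.ofVectorSpace ℚ Wq with hB
    set γ : Fin N → (_ →₀ ℚ) := fun i => B.repr (xh i) with hγ
    -- the coefficient vectors are rational solutions
    have hker : ∀ l ∈ F, ∀ j, ∑ i, (l i : ℚ) * γ i j = 0 := by
      intro l hl j
      have hsum : (∑ i, (l i : ℚ) • xh i) = (0 : Wq) := by
        apply Subtype.ext
        push_cast [AddSubmonoidClass.coe_finset_sum]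
        simp only [Rat.smul_def]
        push_cast
        simpa [evalForm] using mem_solSpace.1 hx l hl
      have := congrArg (fun z => (B.repr z) j) hsum
      simpa [map_sum, map_smul, Finsupp.finset_sum_apply, Finsupp.smul_apply, hγ] using this
    -- common support
    set S : Finset _ := Finset.univ.biUnion (fun i => (γ i).support) with hS
    -- x is a combination of rational solutions
    have hx_expand : ∀ i, x i = ∑ j ∈ S, (γ i j) • (B j : ℝ) := by
      intro i
      have h1 : (Finsupp.linearCombination ℚ (⇑B)) (B.repr (xh i)) = xh i := B.linearCombination_repr (xh i)
      have h2 : (γ i).sum (fun j c => c • B j) = xh i := h1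
      have h3 : (γ i).sum (fun j c => c • B j) = ∑ j ∈ S, γ i j • B j := by
        apply Finsupp.sum_of_support_subset
        · intro j hj; exact Finset.mem_biUnion.2 ⟨i, Finset.mem_univ i, hj⟩
        · intro j _; simp
      have h4 : xh i = ∑ j ∈ S, γ i j • B j := by rw [← h2, h3]
      have := congrArg (Subtype.val) h4
      rw [AddSubmonoidClass.coe_finset_sum] at this
      simpa [Rat.smul_def] using this
    -- rational solution vectors
    have hratsol : ∀ j ∈ S, (fun i => ((γ i j : ℚ) : ℝ)) ∈
        Submodule.span ℝ (toReal '' {v : Fin N → ℤ | toReal v ∈ solSpace F}) := by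
      intro j _
      obtain ⟨d, w, hd, hw⟩ := exists_int_rep (fun i => γ i j)
      have hwsol : toReal w ∈ solSpace F := by
        rw [mem_solSpace]
        intro l hl
        have : ∀ i, (l i : ℝ) * (toReal w i) = (d : ℝ) * ((l i : ℝ) * ((γ i j : ℚ) : ℝ)) := by
          intro i
          have := hw i
          have : ((w i : ℚ) : ℝ) = ((d : ℚ) : ℝ) * ((γ i j : ℚ) : ℝ) := by
            rw [← Rat.cast_mul]; exact_mod_cast congrArg (fun q : ℚ => (q : ℝ)) this
          simp only [toReal]
          push_cast at this ⊢
          rw [this]; ring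
        rw [evalForm, Finset.sum_congr rfl fun i _ => this i, ← Finset.mul_sum]
        have hz : ∑ i, (l i : ℝ) * ((γ i j : ℚ) : ℝ) = 0 := by
          have := hker l hl j
          have := congrArg (fun q : ℚ => (q : ℝ)) this
          push_cast at this
          simpa using this
        rw [hz, mul_zero]
      have hmem : toReal w ∈ toReal '' {v : Fin N → ℤ | toReal v ∈ solSpace F} :=
        Set.mem_image_of_mem _ hwsol
      have hspan := Submodule.subset_span (R := ℝ) hmem
      have : (fun i => ((γ i j : ℚ) : ℝ)) = (d : ℝ)⁻¹ • toReal w := by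
        funext i
        have h5 : ((w i : ℚ) : ℝ) = ((d : ℚ) : ℝ) * ((γ i j : ℚ) : ℝ) := by
          rw [← Rat.cast_mul]; exact_mod_cast congrArg (fun q : ℚ => (q : ℝ)) (hw i)
        have hd' : ((d : ℚ) : ℝ) ≠ 0 := by
          push_cast; exact_mod_cast hd.ne'
        simp only [Pi.smul_apply, toReal, smul_eq_mul]
        push_cast at h5 ⊢
        field_simp
        linarith [h5]
      rw [this]
      exact Submodule.smul_mem _ _ hspan
    -- conclude
    have : x = ∑ j ∈ S, (B j : ℝ) • (fun i => ((γ i j : ℚ) : ℝ)) := by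
      funext i
      rw [hx_expand i]
      simp only [Finset.sum_apply, Pi.smul_apply, smul_eq_mul, Rat.smul_def]
      exact Finset.sum_congr rfl fun j _ => by ring
    rw [this]
    exact Submodule.sum_mem _ fun j hj => Submodule.smul_mem _ _ (hratsol j hj)
  · rw [Submodule.span_le]
    rintro y ⟨v, hv, rfl⟩
    exact hv


end Aux


section Aux2
variable {N : ℕ}

lemma zero_mem_desc (E I : Finset (Fin N → ℤ)) :
    (0 : Fin N → ℝ) ∈ {x : Fin N → ℝ | (∀ l ∈ E, evalForm l x = 0) ∧ ∀ l ∈ I, 0 ≤ evalForm l x} := by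
  constructor <;> intro l _ <;> simp [evalForm]

lemma sol_ball_subset (E I : Finset (Fin N → ℤ)) (x0 : Fin N → ℝ)
    (h2 : ∀ l ∈ I, 0 ≤ evalForm l x0) :
    ∃ ε > 0, ∀ y ∈ solSpace (E ∪ I.filter fun l => evalForm l x0 = 0),
      dist y x0 < ε → ((∀ l ∈ E, evalForm l y = 0) ∧ ∀ l ∈ I, 0 ≤ evalForm l y) := by
  classical
  set I0 := I.filter fun l => evalForm l x0 = 0 with hI0
  set U := ⋂ l ∈ I \ I0, {x : Fin N → ℝ | 0 < evalForm l x} with hU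
  have hUopen : IsOpen U := isOpen_biInter_finset fun l _ =>
    isOpen_lt continuous_const (evalFormL l).continuous_of_finiteDimensional
  have hx0U : x0 ∈ U := by
    simp only [hU, Set.mem_iInter]
    intro l hl
    rw [Finset.mem_sdiff] at hl
    rcases (h2 l hl.1).lt_or_eq with h | h
    · exact h
    · exact absurd (Finset.mem_filter.2 ⟨hl.1, h.symm⟩) hl.2
  obtain ⟨ε, hε, hball⟩ := Metric.isOpen_iff.1 hUopen x0 hx0U
  refine ⟨ε, hε, fun y hy hdist => ⟨?_, ?_⟩⟩
  · intro l hl; exact mem_solSpace.1 hy l (Finset.mem_union_left _ hl)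
  · intro l hl
    by_cases hl0 : evalForm l x0 = 0
    · have hmem : l ∈ I0 := Finset.mem_filter.2 ⟨hl, hl0⟩
      rw [mem_solSpace.1 hy l (Finset.mem_union_right _ hmem)]
    · have hls : l ∈ I \ I0 := Finset.mem_sdiff.2 ⟨hl, fun h => hl0 (Finset.mem_filter.1 h).2⟩
      have hyU : y ∈ U := hball (Metric.mem_ball.2 hdist)
      simp only [hU, Set.mem_iInter] at hyU
      exact (hyU l hls).le

lemma x0_mem_solSpace (E I : Finset (Fin N → ℤ)) (x0 : Fin N → ℝ)
    (h1 : ∀ l ∈ E, evalForm l x0 = 0) :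
    x0 ∈ solSpace (E ∪ I.filter fun l => evalForm l x0 = 0) := by
  rw [mem_solSpace]
  intro l hl
  rcases Finset.mem_union.1 hl with h | h
  · exact h1 l h
  · exact (Finset.mem_filter.1 h).2

lemma span_eq_solSpace (E I : Finset (Fin N → ℤ)) (x0 : Fin N → ℝ)
    (hx0 : x0 ∈ intrinsicInterior ℝ
      {x : Fin N → ℝ | (∀ l ∈ E, evalForm l x = 0) ∧ ∀ l ∈ I, 0 ≤ evalForm l x}) :
    vectorSpan ℝ {x : Fin N → ℝ | (∀ l ∈ E, evalForm l x = 0) ∧ ∀ l ∈ I, 0 ≤ evalForm l x}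
      = solSpace (E ∪ I.filter fun l => evalForm l x0 = 0) := by
  set σ := {x : Fin N → ℝ | (∀ l ∈ E, evalForm l x = 0) ∧ ∀ l ∈ I, 0 ≤ evalForm l x} with hσdef
  have hx0σ : x0 ∈ σ := intrinsicInterior_subset hx0
  rw [vectorSpan_eq_span (zero_mem_desc E I)]
  apply le_antisymm
  · rw [Submodule.span_le]
    intro y hy
    rw [SetLike.mem_coe, mem_solSpace]
    intro l hl
    rcases Finset.mem_union.1 hl with h | h
    · exact hy.1 l h
    · obtain ⟨hlI, hl0⟩ := Finset.mem_filter.1 h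
      exact eq_zero_on_of_relint (f := evalFormL l) (fun z hz => hz.2 l hlI) hx0 hl0 y hy
  · intro w hw
    obtain ⟨ε, hε, hball⟩ := sol_ball_subset E I x0 (fun l hl => hx0σ.2 l hl)
    have hx0sol := x0_mem_solSpace E I x0 (fun l hl => hx0σ.1 l hl)
    set t : ℝ := ε / (2 * (‖w‖ + 1)) with ht
    have ht0 : 0 < t := by positivity
    have hz : x0 + t • w ∈ σ := by
      apply hball
      · exact Submodule.add_mem _ hx0sol (Submodule.smul_mem _ _ hw)
      · rw [dist_eq_norm, add_sub_cancel_left, norm_smul, Real.norm_eq_abs, abs_of_pos ht0]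
        have h1 : t * ‖w‖ < t * (‖w‖ + 1) := by
          apply mul_lt_mul_of_pos_left _ ht0; linarith
        have h2 : t * (‖w‖ + 1) = ε / 2 := by
          rw [ht]; field_simp
        have : (0:ℝ) < ε := hε
        calc t * ‖w‖ < t * (‖w‖ + 1) := h1
          _ = ε / 2 := h2
          _ < ε := by linarith
    have hmem : t • w ∈ Submodule.span ℝ σ := by
      have h1 : x0 + t • w ∈ Submodule.span ℝ σ := Submodule.subset_span hz
      have h2 : x0 ∈ Submodule.span ℝ σ := Submodule.subset_span hx0σ
      simpa using sub_mem h1 h2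
    have := Submodule.smul_mem _ (t⁻¹) hmem
    rwa [smul_smul, inv_mul_cancel₀ ht0.ne', one_smul] at this

lemma relint_of_active_vanish (E I : Finset (Fin N → ℤ)) (x0 : Fin N → ℝ)
    (hx0 : x0 ∈ {x : Fin N → ℝ | (∀ l ∈ E, evalForm l x = 0) ∧ ∀ l ∈ I, 0 ≤ evalForm l x})
    (hvan : ∀ l ∈ I.filter (fun l => evalForm l x0 = 0),
      ∀ v ∈ vectorSpan ℝ {x : Fin N → ℝ | (∀ l ∈ E, evalForm l x = 0) ∧ ∀ l ∈ I, 0 ≤ evalForm l x},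
        evalFormL l v = 0) :
    x0 ∈ intrinsicInterior ℝ
      {x : Fin N → ℝ | (∀ l ∈ E, evalForm l x = 0) ∧ ∀ l ∈ I, 0 ≤ evalForm l x} := by
  set σ := {x : Fin N → ℝ | (∀ l ∈ E, evalForm l x = 0) ∧ ∀ l ∈ I, 0 ≤ evalForm l x} with hσdef
  rw [mem_intrinsicInterior_iff]
  refine ⟨hx0, ?_⟩
  obtain ⟨ε, hε, hball⟩ := sol_ball_subset E I x0 (fun l hl => hx0.2 l hl)
  refine ⟨ε, hε, fun y hy hdy => ?_⟩
  rw [affineSpan_coe_eq (zero_mem_desc E I)] at hy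
  have hysol : y ∈ solSpace (E ∪ I.filter fun l => evalForm l x0 = 0) := by
    rw [mem_solSpace]
    intro l hl
    rcases Finset.mem_union.1 hl with h | h
    · -- forms in E vanish on the span
      have hker : vectorSpan ℝ σ ≤ LinearMap.ker (evalFormL l) := by
        rw [vectorSpan_eq_span (zero_mem_desc E I), Submodule.span_le]
        intro z hz
        rw [SetLike.mem_coe, LinearMap.mem_ker]
        exact hz.1 l h
      exact hker hy
    · exact hvan l h y hy
  exact hball y hysol hdy

lemma exists_separating_form {σ : Set (Fin N → ℝ)} (hσ : IsRationalCone σ) {x0 : Fin N → ℝ}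
    (hx0 : x0 ∈ σ) (hni : x0 ∉ intrinsicInterior ℝ σ) :
    ∃ l : Fin N → ℤ, evalForm l x0 = 0 ∧ (∀ y ∈ σ, 0 ≤ evalForm l y) ∧
      ∃ v ∈ vectorSpan ℝ σ, evalFormL l v ≠ 0 := by
  classical
  obtain ⟨E, I, rfl⟩ := hσ
  by_contra hcon
  push_neg at hcon
  apply hni
  apply relint_of_active_vanish E I x0 hx0
  intro l hl v hv
  obtain ⟨hlI, hl0⟩ := Finset.mem_filter.1 hl
  by_contra hne
  exact hne (hcon l hl0 (fun y hy => hy.2 l hlI) v hv)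

lemma vectorSpan_eq_span_lattice {σ : Set (Fin N → ℝ)} (hσ : IsRationalCone σ)
    (hne : σ.Nonempty) :
    vectorSpan ℝ σ
      = Submodule.span ℝ (toReal '' {v : Fin N → ℤ | toReal v ∈ vectorSpan ℝ σ}) := by
  obtain ⟨x0, hx0⟩ := Set.Nonempty.intrinsicInterior hσ.convex hne
  obtain ⟨E, I, rfl⟩ := hσ
  rw [span_eq_solSpace E I x0 hx0]
  exact solSpace_eq_span_lattice _

lemma exists_lattice_ne_zero {σ : Set (Fin N → ℝ)} (hσ : IsRationalCone σ)
    (hne : σ.Nonempty) {f : (Fin N → ℝ) →ₗ[ℝ] ℝ}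
    (hf : ∃ v ∈ vectorSpan ℝ σ, f v ≠ 0) :
    ∃ w : Fin N → ℤ, toReal w ∈ vectorSpan ℝ σ ∧ f (toReal w) ≠ 0 := by
  by_contra hcon
  push_neg at hcon
  obtain ⟨v, hv, hfv⟩ := hf
  apply hfv
  have hker : vectorSpan ℝ σ ≤ LinearMap.ker f := by
    rw [vectorSpan_eq_span_lattice hσ hne, Submodule.span_le]
    rintro z ⟨w, hw, rfl⟩
    rw [SetLike.mem_coe, LinearMap.mem_ker]
    exact hcon w hw
  exact hker hv

lemma exists_pos_on_cone {σ : Set (Fin N → ℝ)} (h0 : (0:Fin N → ℝ) ∈ σ)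
    {f : (Fin N → ℝ) →ₗ[ℝ] ℝ} (hpos : ∀ y ∈ σ, 0 ≤ f y)
    (hf : ∃ v ∈ vectorSpan ℝ σ, f v ≠ 0) :
    ∃ p ∈ σ, 0 < f p := by
  by_contra hcon
  push_neg at hcon
  obtain ⟨v, hv, hfv⟩ := hf
  apply hfv
  have hker : vectorSpan ℝ σ ≤ LinearMap.ker f := by
    rw [vectorSpan_eq_span h0, Submodule.span_le]
    intro z hz
    rw [SetLike.mem_coe, LinearMap.mem_ker]
    exact le_antisymm (hcon z hz) (hpos z hz)
  exact hker hv

end Aux2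


section FanLemmas
variable {N : ℕ}

lemma pairZ_add (l a b : Fin N → ℤ) : pairZ l (a + b) = pairZ l a + pairZ l b := by
  simp [pairZ, mul_add, Finset.sum_add_distrib]

lemma pairZ_smul (l : Fin N → ℤ) (m : ℤ) (a : Fin N → ℤ) : pairZ l (m • a) = m * pairZ l a := by
  simp [pairZ, Finset.mul_sum, mul_left_comm]

lemma pairZ_zero (l : Fin N → ℤ) : pairZ l 0 = 0 := by simp [pairZ]

lemma pairZ_neg (l a : Fin N → ℤ) : pairZ l (-a) = -pairZ l a := by
  simp [pairZ, Finset.sum_neg_distrib]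

lemma pairZ_sub (l a b : Fin N → ℤ) : pairZ l (a - b) = pairZ l a - pairZ l b := by
  simp [pairZ, mul_sub, Finset.sum_sub_distrib]

/-- the minimal cone of `x` is contained in every polyhedron of the complex containing `x` -/
lemma WComplex.min_cone {Z : WComplex N} {ρ D : Set (Fin N → ℝ)} (hρ : ρ ∈ Z.polys)
    (hD : D ∈ Z.polys) {x : Fin N → ℝ} (hx : x ∈ intrinsicInterior ℝ ρ) (hxD : x ∈ D) :
    ρ ⊆ D := by
  have hxρ : x ∈ ρ := intrinsicInterior_subset hx
  have hne : (ρ ∩ D).Nonempty := ⟨x, hxρ, hxD⟩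
  have hmem := Z.inter_mem ρ hρ D hD hne
  obtain ⟨η, ⟨hη, hηsub, hηx⟩, -⟩ := Z.decomp (ρ ∩ D) hmem x ⟨hxρ, hxD⟩
  obtain ⟨τ', -, huniq⟩ := Z.decomp ρ hρ x hxρ
  have h1 : η = τ' := huniq η ⟨hη, hηsub.trans Set.inter_subset_left, hηx⟩
  have h2 : ρ = τ' := huniq ρ ⟨hρ, subset_rfl, hx⟩
  have hρη : ρ = η := h2.trans h1.symm
  rw [hρη]
  exact hηsub.trans Set.inter_subset_right

/-- no strict inclusion between polyhedra of the same dimension -/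
lemma WComplex.eq_of_subset_of_dim_le {Z : WComplex N} (hZ : Z.IsFan)
    {A B : Set (Fin N → ℝ)} (hA : A ∈ Z.polys) (hB : B ∈ Z.polys)
    (hAB : A ⊆ B) (hdim : polyDim B ≤ polyDim A) : A = B := by
  have hspan : vectorSpan ℝ A = vectorSpan ℝ B :=
    Submodule.eq_of_le_of_finrank_le (vectorSpan_mono ℝ hAB) hdim
  obtain ⟨x0, hx0⟩ := Set.Nonempty.intrinsicInterior (hZ A hA).convex (Z.nonempty_mem A hA)
  have h0A : (0 : Fin N → ℝ) ∈ A := (hZ A hA).zero_mem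
  have h0B : (0 : Fin N → ℝ) ∈ B := (hZ B hB).zero_mem
  have hcoe : (affineSpan ℝ A : Set (Fin N → ℝ)) = (affineSpan ℝ B : Set (Fin N → ℝ)) := by
    rw [affineSpan_coe_eq h0A, affineSpan_coe_eq h0B, hspan]
  have hx0B : x0 ∈ intrinsicInterior ℝ B := by
    rw [mem_intrinsicInterior_iff] at hx0 ⊢
    obtain ⟨hx0A, ε, hε, hball⟩ := hx0
    exact ⟨hAB hx0A, ε, hε, fun y hy hd => hAB (hball y (hcoe ▸ hy) hd)⟩
  obtain ⟨τ', -, huniq⟩ := Z.decomp B hB x0 (hAB (intrinsicInterior_subset hx0))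
  have h1 : A = τ' := huniq A ⟨hA, hAB, hx0⟩
  have h2 : B = τ' := huniq B ⟨hB, subset_rfl, hx0B⟩
  rw [h1, h2]

/-- existence of a least star polyhedron containing a given nonempty set -/
lemma WComplex.exists_least_star (X : WComplex N) {s : Set (Fin N → ℝ)} (hne : s.Nonempty)
    (hex : ∃ D ∈ X.starPolys, s ⊆ D) :
    ∃ M ∈ X.starPolys, s ⊆ M ∧ ∀ D ∈ X.starPolys, s ⊆ D → M ⊆ D := by
  classical
  set T : Finset (Set (Fin N → ℝ)) :=
    X.finite.toFinset.filter (fun D => D ∈ X.starPolys ∧ s ⊆ D) with hT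
  have hmemT : ∀ D, D ∈ T ↔ (D ∈ X.starPolys ∧ s ⊆ D) := by
    intro D
    rw [hT, Finset.mem_filter, Set.Finite.mem_toFinset]
    constructor
    · rintro ⟨-, h⟩; exact h
    · rintro ⟨h1, h2⟩; exact ⟨h1.1, h1, h2⟩
  have hTne : T.Nonempty := by
    obtain ⟨D, hD, hsD⟩ := hex
    exact ⟨D, (hmemT D).2 ⟨hD, hsD⟩⟩
  obtain ⟨M, hM, hmin⟩ := T.exists_minimal hTne
  obtain ⟨hMstar, hsM⟩ := (hmemT M).1 hM
  refine ⟨M, hMstar, hsM, fun D hD hsD => ?_⟩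
  have hMD : M ∩ D ∈ T := by
    rw [hmemT]
    have hpoly : M ∩ D ∈ X.polys := X.inter_mem M hMstar.1 D hD.1 ⟨hne.some, hsM hne.some_mem, hsD hne.some_mem⟩
    obtain ⟨-, σM, hσM, hdimσ, hwσ, hMσ⟩ := hMstar
    refine ⟨⟨hpoly, σM, hσM, hdimσ, hwσ, Set.inter_subset_left.trans hMσ⟩, Set.subset_inter hsM hsD⟩
  have hsub : M ∩ D ⊆ M := Set.inter_subset_left
  rcases hsub.eq_or_ssubset with h | h
  · rw [← h]; exact Set.inter_subset_right
  · exact absurd (hmin hMD h.subset) (not_subset_of_ssubset h)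

/-- **Lemma P**: existence of primitive normal vectors, with a separating form -/
lemma WComplex.exists_primitive_normal {Z : WComplex N} (hZ : Z.IsFan)
    {τ σ : Set (Fin N → ℝ)} (hτ : τ ∈ Z.polys) (hσ : σ ∈ Z.polys)
    (hsub : τ ⊆ σ) (hne : τ ≠ σ) (hd : polyDim τ + 1 = polyDim σ) :
    ∃ (v l : Fin N → ℤ), IsPrimitiveNormal τ σ v ∧
      (∀ x ∈ σ, 0 ≤ evalForm l x) ∧ (∀ x ∈ τ, evalForm l x = 0) ∧
      (LinearMap.ker (evalFormL l) ⊓ vectorSpan ℝ σ = vectorSpan ℝ τ) ∧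
      0 < pairZ l v := by
  classical
  obtain ⟨x0, hx0⟩ := Set.Nonempty.intrinsicInterior (hZ τ hτ).convex (Z.nonempty_mem τ hτ)
  have hx0τ : x0 ∈ τ := intrinsicInterior_subset hx0
  -- x0 is not in the relative interior of σ
  have hni : x0 ∉ intrinsicInterior ℝ σ := by
    intro hmem
    obtain ⟨τ', -, huniq⟩ := Z.decomp σ hσ x0 (hsub hx0τ)
    exact hne ((huniq τ ⟨hτ, hsub, hx0⟩).trans (huniq σ ⟨hσ, subset_rfl, hmem⟩).symm)
  obtain ⟨l, hl0, hlpos, v₀, hv₀V, hv₀ne⟩ := exists_separating_form (hZ σ hσ) (hsub hx0τ) hni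
  -- l vanishes on τ
  have hlτ : ∀ y ∈ τ, evalForm l y = 0 :=
    eq_zero_on_of_relint (f := evalFormL l) (fun y hy => hlpos y (hsub hy)) hx0 hl0
  have hlVτ : vectorSpan ℝ τ ≤ LinearMap.ker (evalFormL l) := by
    rw [vectorSpan_eq_span (hZ τ hτ).zero_mem, Submodule.span_le]
    intro y hy
    rw [SetLike.mem_coe, LinearMap.mem_ker]
    exact hlτ y hy
  -- kernel intersection is V_τ
  have hK : LinearMap.ker (evalFormL l) ⊓ vectorSpan ℝ σ = vectorSpan ℝ τ := by
    have hle : vectorSpan ℝ τ ≤ LinearMap.ker (evalFormL l) ⊓ vectorSpan ℝ σ :=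
      le_inf hlVτ (vectorSpan_mono ℝ hsub)
    have hlt : LinearMap.ker (evalFormL l) ⊓ vectorSpan ℝ σ < vectorSpan ℝ σ := by
      apply lt_of_le_of_ne inf_le_right
      intro heq
      have : v₀ ∈ LinearMap.ker (evalFormL l) ⊓ vectorSpan ℝ σ := heq.symm ▸ hv₀V
      exact hv₀ne (LinearMap.mem_ker.1 this.1)
    have hfr : Module.finrank ℝ (LinearMap.ker (evalFormL l) ⊓ vectorSpan ℝ σ : Submodule ℝ _)
        < polyDim σ := Submodule.finrank_lt_finrank_of_lt hlt
    have hfr2 : Module.finrank ℝ (LinearMap.ker (evalFormL l) ⊓ vectorSpan ℝ σ : Submodule ℝ _)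
        ≤ polyDim τ := by omega
    exact (Submodule.eq_of_le_of_finrank_le hle hfr2).symm
  -- the subgroup of values of l on the lattice of σ
  set H : AddSubgroup ℤ :=
    { carrier := {n : ℤ | ∃ w : Fin N → ℤ, toReal w ∈ vectorSpan ℝ σ ∧ pairZ l w = n}
      zero_mem' := ⟨0, by simp, pairZ_zero l⟩
      add_mem' := by
        rintro a b ⟨wa, hwa, rfl⟩ ⟨wb, hwb, rfl⟩
        exact ⟨wa + wb, by rw [toReal_add]; exact Submodule.add_mem _ hwa hwb,
          pairZ_add l wa wb⟩
      neg_mem' := by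
        rintro a ⟨w, hw, rfl⟩
        exact ⟨-w, by rw [toReal_neg]; exact Submodule.neg_mem _ hw, pairZ_neg l w⟩ } with hHdef
  have hmemH : ∀ n : ℤ, n ∈ H ↔ ∃ w : Fin N → ℤ, toReal w ∈ vectorSpan ℝ σ ∧ pairZ l w = n :=
    fun n => Iff.rfl
  -- H is nonzero
  obtain ⟨w₁, hw₁V, hw₁ne⟩ := exists_lattice_ne_zero (hZ σ hσ) (Z.nonempty_mem σ hσ)
    ⟨v₀, hv₀V, hv₀ne⟩
  have hw₁ne' : pairZ l w₁ ≠ 0 := by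
    intro h
    apply hw₁ne
    rw [evalFormL_apply, evalForm_toReal, h, Int.cast_zero]
  obtain ⟨a, ha⟩ := Int.subgroup_cyclic H
  have hane : a ≠ 0 := by
    rintro rfl
    have : pairZ l w₁ ∈ H := ⟨w₁, hw₁V, rfl⟩
    rw [ha, AddSubgroup.mem_closure_singleton] at this
    obtain ⟨n, hn⟩ := this
    simp at hn
    exact hw₁ne' hn.symm
  -- get a generator with positive value
  have haH : a ∈ H := by rw [ha]; exact AddSubgroup.subset_closure rfl
  obtain ⟨wa, hwaV, hwa⟩ := haH
  obtain ⟨v, hvV, hvval, hvpos⟩ :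
      ∃ v : Fin N → ℤ, toReal v ∈ vectorSpan ℝ σ ∧ (pairZ l v = a ∨ pairZ l v = -a) ∧
        0 < pairZ l v := by
    rcases hane.lt_or_gt with h | h
    · exact ⟨-wa, by rw [toReal_neg]; exact Submodule.neg_mem _ hwaV,
        Or.inr (by rw [pairZ_neg, hwa]), by rw [pairZ_neg, hwa]; omega⟩
    · exact ⟨wa, hwaV, Or.inl hwa, hwa ▸ h⟩
  refine ⟨v, l, ⟨hvV, ?_, l, 0, fun x hx => hlτ x hx, fun x hx => by
      simpa using hlpos x hx, hvpos⟩, hlpos, hlτ, hK, hvpos⟩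
  -- generation property
  intro w hwV
  have hwH : pairZ l w ∈ H := ⟨w, hwV, rfl⟩
  rw [ha, AddSubgroup.mem_closure_singleton] at hwH
  obtain ⟨n, hn⟩ := hwH
  -- pairZ l w = n • a, and pairZ l v = ± a
  have hdvd : ∃ m : ℤ, pairZ l w = m * pairZ l v := by
    rcases hvval with h | h
    · exact ⟨n, by rw [h, ← hn, smul_eq_mul]⟩
    · exact ⟨-n, by rw [h, ← hn, smul_eq_mul]; ring⟩
  obtain ⟨m, hm⟩ := hdvd
  refine ⟨m, w - m • v, ?_, by abel⟩
  have hker : toReal (w - m • v) ∈ LinearMap.ker (evalFormL l) ⊓ vectorSpan ℝ σ := by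
    rw [Submodule.mem_inf]
    constructor
    · rw [LinearMap.mem_ker, evalFormL_apply, evalForm_toReal]
      rw [pairZ_sub, pairZ_smul, hm]
      push_cast
      ring
    · rw [toReal_sub, toReal_intsmul]
      exact Submodule.sub_mem _ hwV (Submodule.smul_mem _ _ hvV)
  rw [hK] at hker
  exact hker

end FanLemmas


section SignLemmas
variable {N : ℕ}

lemma decomp_in_span {Vτ Vσ : Submodule ℝ (Fin N → ℝ)} (hle : Vτ ≤ Vσ)
    (hfr : Module.finrank ℝ Vτ + 1 = Module.finrank ℝ Vσ)
    {v : Fin N → ℝ} (hv : v ∈ Vσ) (hvn : v ∉ Vτ) {p : Fin N → ℝ} (hp : p ∈ Vσ) :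
    ∃ (c : ℝ) (u : Fin N → ℝ), u ∈ Vτ ∧ p = u + c • v := by
  set W := Vτ ⊔ Submodule.span ℝ {v} with hW
  have hWle : W ≤ Vσ := sup_le hle (by rwa [Submodule.span_singleton_le_iff_mem])
  have hlt : Vτ < W := by
    apply lt_of_le_of_ne le_sup_left
    intro heq
    apply hvn
    rw [heq]
    exact (le_sup_right : Submodule.span ℝ {v} ≤ _) (Submodule.mem_span_singleton_self v)
  have hfrW : Module.finrank ℝ Vσ ≤ Module.finrank ℝ W := by
    have := Submodule.finrank_lt_finrank_of_lt (t := Vσ) (s := Vτ) (lt_of_lt_of_le hlt hWle)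
    have h2 := Submodule.finrank_lt_finrank_of_lt (t := W) (s := Vτ)
      (hlt.trans_le (le_refl W))
    · omega
  have hWeq : W = Vσ := Submodule.eq_of_le_of_finrank_le hWle hfrW
  have hpW : p ∈ W := hWeq.symm ▸ hp
  obtain ⟨u, hu, z, hz, huz⟩ := Submodule.mem_sup.1 hpW
  obtain ⟨c, rfl⟩ := Submodule.mem_span_singleton.1 hz
  exact ⟨c, u, hu, huz.symm⟩

/-- a primitive normal vector of `(τ, σ)` pairs positively with any linear form that
vanishes on `V_τ`, is nonnegative on `σ` and is nonzero somewhere on `V_σ`. -/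
lemma primitive_pos {Z : WComplex N} (hZ : Z.IsFan) {τ σ : Set (Fin N → ℝ)}
    (hτ : τ ∈ Z.polys) (hσ : σ ∈ Z.polys) (hsub : τ ⊆ σ)
    (hd : polyDim τ + 1 = polyDim σ) {v : Fin N → ℤ} (hv : IsPrimitiveNormal τ σ v)
    {f : (Fin N → ℝ) →ₗ[ℝ] ℝ} (hf0 : ∀ u ∈ vectorSpan ℝ τ, f u = 0)
    (hfpos : ∀ y ∈ σ, 0 ≤ f y) (hfne : ∃ z ∈ vectorSpan ℝ σ, f z ≠ 0) :
    0 < f (toReal v) := by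
  obtain ⟨hvV, hgen, l', c', hl'τ, hl'σ, hl'v⟩ := hv
  -- the form l' of the primitive normal has c' = 0 and vanishes on V_τ
  have hc' : c' = 0 := by
    have := hl'τ 0 (hZ τ hτ).zero_mem
    simpa [evalForm] using this.symm
  have hg0 : ∀ u ∈ vectorSpan ℝ τ, evalFormL l' u = 0 := by
    intro u hu
    have hker : vectorSpan ℝ τ ≤ LinearMap.ker (evalFormL l') := by
      rw [vectorSpan_eq_span (hZ τ hτ).zero_mem, Submodule.span_le]
      intro y hy
      rw [SetLike.mem_coe, LinearMap.mem_ker, evalFormL_apply, hl'τ y hy, hc']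
    exact hker hu
  have hgpos : ∀ y ∈ σ, 0 ≤ evalFormL l' y := by
    intro y hy
    rw [evalFormL_apply]
    have := hl'σ y hy
    rw [hc'] at this
    exact this
  have hgv : 0 < evalFormL l' (toReal v) := by
    rw [evalFormL_apply, evalForm_toReal]
    exact_mod_cast hl'v
  -- pick p in σ with 0 < f p
  obtain ⟨p, hpσ, hfp⟩ := exists_pos_on_cone (hZ σ hσ).zero_mem hfpos hfne
  have hpV : p ∈ vectorSpan ℝ σ := subset_vectorSpan (hZ σ hσ).zero_mem hpσ
  have hvnτ : toReal v ∉ vectorSpan ℝ τ := by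
    intro h
    have := hg0 _ h
    rw [this] at hgv
    exact lt_irrefl _ hgv
  obtain ⟨c, u, huV, hpu⟩ := decomp_in_span (vectorSpan_mono ℝ hsub) hd hvV hvnτ hpV
  have hfpu : f p = c * f (toReal v) := by
    rw [hpu, map_add, map_smul, hf0 u huV, zero_add, smul_eq_mul]
  have hgpu : evalFormL l' p = c * evalFormL l' (toReal v) := by
    rw [hpu, map_add, map_smul, hg0 u huV, zero_add, smul_eq_mul]
  have hcne : c ≠ 0 := by
    intro h
    rw [h, zero_mul] at hfpu
    exact hfp.ne' hfpu
  have hcpos : 0 < c := by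
    have h1 : 0 ≤ evalFormL l' p := hgpos p hpσ
    rw [hgpu] at h1
    rcases hcne.lt_or_gt with h | h
    · nlinarith
    · exact h
  nlinarith

lemma primitive_mutual {τ σ ρ ν : Set (Fin N → ℝ)}
    (hτρ : vectorSpan ℝ τ = vectorSpan ℝ ρ) (hσν : vectorSpan ℝ σ = vectorSpan ℝ ν)
    {v w : Fin N → ℤ} (hv : IsPrimitiveNormal τ σ v) (hw : IsPrimitiveNormal ρ ν w)
    {f : (Fin N → ℝ) →ₗ[ℝ] ℝ} (hf0 : ∀ u ∈ vectorSpan ℝ τ, f u = 0)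
    (hfw : f (toReal w) ≠ 0) :
    ∃ a : ℤ, (a = 1 ∨ a = -1) ∧ toReal (w - a • v) ∈ vectorSpan ℝ τ ∧
      f (toReal w) = (a : ℝ) * f (toReal v) := by
  obtain ⟨hvV, hgenv, -⟩ := hv
  obtain ⟨hwV, hgenw, -⟩ := hw
  obtain ⟨a, u, huV, hu⟩ := hgenv w (by rw [hσν]; exact hwV)
  obtain ⟨a', u', hu'V, hu'⟩ := hgenw v (by rw [← hτρ] at *; rw [← hσν] at *; exact hvV)
  have hu'Vτ : toReal u' ∈ vectorSpan ℝ τ := by rw [hτρ]; exact hu'V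
  -- substitution
  have hsubst : w = (a * a') • w + (a • u' + u) := by
    calc w = a • v + u := hu
    _ = a • (a' • w + u') + u := by rw [← hu']
    _ = (a * a') • w + (a • u' + u) := by rw [smul_add, smul_smul]; abel
  have hkey : (1 - (a : ℝ) * (a' : ℝ)) • toReal w = (a : ℝ) • toReal u' + toReal u := by
    have h1 : w - (a * a') • w = a • u' + u := by
      nth_rewrite 1 [hsubst]; abel
    have := congrArg toReal h1
    rw [toReal_sub, toReal_intsmul, toReal_add, toReal_intsmul] at this
    rw [sub_smul, one_smul]
    push_cast at this ⊢
    exact this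
  have haa' : a * a' = 1 := by
    by_contra hne
    apply hfw
    have hmem : (1 - (a : ℝ) * (a' : ℝ)) • toReal w ∈ vectorSpan ℝ τ := by
      rw [hkey]
      exact Submodule.add_mem _ (Submodule.smul_mem _ _ hu'Vτ) huV
    have hcne : (1 - (a : ℝ) * (a' : ℝ)) ≠ 0 := by
      intro h
      apply hne
      have : ((a * a' : ℤ) : ℝ) = 1 := by push_cast; linarith
      exact_mod_cast this
    have hwmem : toReal w ∈ vectorSpan ℝ τ := by
      have := Submodule.smul_mem _ (1 - (a : ℝ) * (a' : ℝ))⁻¹ hmem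
      rwa [smul_smul, inv_mul_cancel₀ hcne, one_smul] at this
    exact hf0 _ hwmem
  refine ⟨a, Int.eq_one_or_neg_one_of_mul_eq_one haa', ?_, ?_⟩
  · have : w - a • v = u := by rw [hu]; abel
    rw [this]; exact huV
  · have := congrArg toReal hu
    rw [toReal_add, toReal_intsmul] at this
    rw [this, map_add, map_smul, hf0 _ huV, add_zero, smul_eq_mul]

lemma primitive_match {τ σ ρ ν : Set (Fin N → ℝ)}
    (hτρ : vectorSpan ℝ τ = vectorSpan ℝ ρ) (hσν : vectorSpan ℝ σ = vectorSpan ℝ ν)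
    {v w : Fin N → ℤ} (hv : IsPrimitiveNormal τ σ v) (hw : IsPrimitiveNormal ρ ν w)
    {f : (Fin N → ℝ) →ₗ[ℝ] ℝ} (hf0 : ∀ u ∈ vectorSpan ℝ τ, f u = 0)
    (hfv : 0 < f (toReal v)) (hfw : 0 < f (toReal w)) :
    toReal (w - v) ∈ vectorSpan ℝ τ := by
  obtain ⟨a, hcase, hmem, heq⟩ := primitive_mutual hτρ hσν hv hw hf0 hfw.ne'
  rcases hcase with rfl | rfl
  · simpa using hmem
  · exfalso; push_cast at heq; nlinarith

lemma primitive_opp {τ σ ρ ν : Set (Fin N → ℝ)}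
    (hτρ : vectorSpan ℝ τ = vectorSpan ℝ ρ) (hσν : vectorSpan ℝ σ = vectorSpan ℝ ν)
    {v w : Fin N → ℤ} (hv : IsPrimitiveNormal τ σ v) (hw : IsPrimitiveNormal ρ ν w)
    {f : (Fin N → ℝ) →ₗ[ℝ] ℝ} (hf0 : ∀ u ∈ vectorSpan ℝ τ, f u = 0)
    (hfv : 0 < f (toReal v)) (hfw : f (toReal w) < 0) :
    toReal (w + v) ∈ vectorSpan ℝ τ := by
  obtain ⟨a, hcase, hmem, heq⟩ := primitive_mutual hτρ hσν hv hw hf0 hfw.ne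
  rcases hcase with rfl | rfl
  · exfalso; push_cast at heq; nlinarith
  · have : w + v = w - (-1 : ℤ) • v := by simp
    rw [this]; exact hmem

end SignLemmas


section GeomLemmas
variable {N : ℕ}

lemma relint_segment {ν : Set (Fin N → ℝ)} (hconv : Convex ℝ ν) {x0 y1 : Fin N → ℝ}
    (hx0 : x0 ∈ ν) (hy1 : y1 ∈ intrinsicInterior ℝ ν) {t : ℝ} (ht0 : 0 < t) (ht1 : t ≤ 1) :
    x0 + t • (y1 - x0) ∈ intrinsicInterior ℝ ν := by
  rw [mem_intrinsicInterior_iff] at hy1 ⊢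
  obtain ⟨hy1ν, ε, hε, hball⟩ := hy1
  set z := x0 + t • (y1 - x0) with hzdef
  have hzν : z ∈ ν := by
    have := hconv hx0 hy1ν (by linarith : (0:ℝ) ≤ 1 - t) ht0.le (by ring)
    convert this using 1
    rw [hzdef]
    module
  refine ⟨hzν, t * ε, by positivity, fun y hy hd => ?_⟩
  have hzspan : z ∈ affineSpan ℝ ν := subset_affineSpan ℝ ν hzν
  have hy1span : y1 ∈ affineSpan ℝ ν := subset_affineSpan ℝ ν hy1ν
  set y' := y1 + t⁻¹ • (y - z) with hy'def
  have hy'ν : y' ∈ ν := by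
    apply hball
    · have := AffineSubspace.smul_vsub_vadd_mem (affineSpan ℝ ν) t⁻¹ hy hzspan hy1span
      convert this using 1
      rw [hy'def]
      simp [vsub_eq_sub]
      abel
    · rw [hy'def]
      have : y1 + t⁻¹ • (y - z) - y1 = t⁻¹ • (y - z) := by abel
      rw [dist_eq_norm, this, norm_smul, Real.norm_eq_abs, abs_of_pos (by positivity)]
      rw [dist_eq_norm] at hd
      calc t⁻¹ * ‖y - z‖ < t⁻¹ * (t * ε) := by
            apply mul_lt_mul_of_pos_left hd (by positivity)
        _ = ε := by field_simp
  have hyy : y = x0 + t • (y' - x0) := by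
    have h1 : t • (t⁻¹ • (y - z)) = y - z := by
      rw [smul_smul, mul_inv_cancel₀ ht0.ne', one_smul]
    have h2 : y' - x0 = (y1 - x0) + t⁻¹ • (y - z) := by rw [hy'def]; abel
    calc y = z + (y - z) := by abel
    _ = x0 + t • (y1 - x0) + t • (t⁻¹ • (y - z)) := by rw [h1, ← hzdef]
    _ = x0 + t • ((y1 - x0) + t⁻¹ • (y - z)) := by rw [smul_add]; abel
    _ = x0 + t • (y' - x0) := by rw [h2]
  rw [hyy]
  have := hconv hx0 hy'ν (by linarith : (0:ℝ) ≤ 1 - t) ht0.le (by ring)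
  convert this using 1
  module

lemma exists_closed_accum {S : Finset (Set (Fin N → ℝ))} (hcl : ∀ C ∈ S, IsClosed C)
    {x : ℕ → Fin N → ℝ} {x0 : Fin N → ℝ} (hmem : ∀ n, ∃ C ∈ S, x n ∈ C)
    (hlim : Filter.Tendsto x Filter.atTop (nhds x0)) :
    ∃ C ∈ S, x0 ∈ C ∧ ∃ n, x n ∈ C := by
  classical
  have hinf : ∃ C ∈ S, {n | x n ∈ C}.Infinite := by
    by_contra h
    push_neg at h
    have hsub : (Set.univ : Set ℕ) ⊆ ⋃ C ∈ S, {n | x n ∈ C} := by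
      intro n _
      obtain ⟨C, hC, hx⟩ := hmem n
      exact Set.mem_biUnion hC hx
    have : (Set.univ : Set ℕ).Finite :=
      Set.Finite.subset (Set.Finite.biUnion S.finite_toSet h) hsub
    exact Set.infinite_univ this
  obtain ⟨C, hC, hinf⟩ := hinf
  refine ⟨C, hC, ?_, ?_⟩
  · apply (hcl C hC).mem_of_frequently_of_tendsto ?_ hlim
    rw [Nat.frequently_atTop_iff_infinite]
    exact hinf
  · obtain ⟨n, hn⟩ := hinf.nonempty
    exact ⟨n, hn⟩

lemma exists_generic_relint {τ : Set (Fin N → ℝ)} (hconv : Convex ℝ τ) (hne : τ.Nonempty)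
    (bad : Finset (Set (Fin N → ℝ)))
    (hbad : ∀ C ∈ bad, Convex ℝ C ∧
      Module.finrank ℝ (vectorSpan ℝ C) < Module.finrank ℝ (vectorSpan ℝ τ)) :
    ∃ x0 ∈ intrinsicInterior ℝ τ, ∀ C ∈ bad, x0 ∉ C := by
  classical
  obtain ⟨x1, hx1⟩ := Set.Nonempty.intrinsicInterior hconv hne
  -- choose a generic direction d in V_τ
  set s : Finset (Subspace ℝ (vectorSpan ℝ τ)) :=
    bad.image (fun C => Submodule.comap (vectorSpan ℝ τ).subtype (vectorSpan ℝ C)) with hs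
  have htop : ⊤ ∉ s := by
    intro hmem
    rw [hs, Finset.mem_image] at hmem
    obtain ⟨C, hC, hCeq⟩ := hmem
    rw [Submodule.comap_subtype_eq_top] at hCeq
    exact absurd (Submodule.finrank_mono hCeq) (not_le.2 (hbad C hC).2)
  have hne_univ := Subspace.biUnion_ne_univ_of_top_notMem htop
  obtain ⟨dh, hdh⟩ := (Set.ne_univ_iff_exists_notMem _).1 hne_univ
  set d : Fin N → ℝ := (dh : Fin N → ℝ) with hd
  have hdV : d ∈ vectorSpan ℝ τ := dh.2
  have hdC : ∀ C ∈ bad, d ∉ vectorSpan ℝ C := by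
    intro C hC hmem
    apply hdh
    apply Set.mem_biUnion (Finset.mem_image_of_mem _ hC)
    exact hmem
  -- ball around x1 within the relative interior
  obtain ⟨ε, hε, hball⟩ := intrinsicInterior_ball hx1
  set ε' : ℝ := ε / (‖d‖ + 1) with hε'
  have hε'0 : 0 < ε' := by positivity
  -- the set of bad parameters is finite
  set T : Set ℝ := {t | ∃ C ∈ bad, x1 + t • d ∈ C} with hT
  have hTfin : T.Finite := by
    have hsub : T ⊆ ⋃ C ∈ bad, {t | x1 + t • d ∈ C} := by
      intro t ⟨C, hC, hmem⟩
      exact Set.mem_biUnion hC hmem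
    apply Set.Finite.subset (Set.Finite.biUnion bad.finite_toSet ?_) hsub
    intro C hC
    apply Set.Subsingleton.finite
    intro t1 h1 t2 h2
    by_contra hne'
    apply hdC C hC
    have hvs : (x1 + t1 • d) -ᵥ (x1 + t2 • d) ∈ vectorSpan ℝ C := vsub_mem_vectorSpan ℝ h1 h2
    have heq : (x1 + t1 • d) -ᵥ (x1 + t2 • d) = (t1 - t2) • d := by
      simp only [vsub_eq_sub, sub_smul]
      abel
    rw [heq] at hvs
    have := Submodule.smul_mem _ (t1 - t2)⁻¹ hvs
    rwa [smul_smul, inv_mul_cancel₀ (sub_ne_zero.2 hne'), one_smul] at this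
  -- pick a good parameter
  have hIoo : (Set.Ioo (0:ℝ) ε').Infinite := Set.infinite_coe_iff.1 (Set.Ioo.infinite hε'0)
  obtain ⟨t, ht⟩ := (hIoo.diff hTfin).nonempty
  obtain ⟨⟨ht0, htε⟩, htT⟩ := ht
  refine ⟨x1 + t • d, ?_, ?_⟩
  · apply hball
    · have hrw : x1 + t • d = (t • d) +ᵥ x1 := by
        simp only [vadd_eq_add]; abel
      rw [hrw]
      apply AffineSubspace.vadd_mem_of_mem_direction (v := t • d)
      · rw [direction_affineSpan]
        exact Submodule.smul_mem _ _ hdV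
      · exact subset_affineSpan ℝ τ (intrinsicInterior_subset hx1)
    · have : x1 + t • d - x1 = t • d := by abel
      rw [dist_eq_norm, this, norm_smul, Real.norm_eq_abs, abs_of_pos ht0]
      calc t * ‖d‖ ≤ t * (‖d‖ + 1) := by nlinarith
        _ < ε' * (‖d‖ + 1) := by
            apply mul_lt_mul_of_pos_right htε (by positivity)
        _ = ε := by rw [hε']; field_simp
  · intro C hC hmem
    exact htT ⟨C, hC, hmem⟩

end GeomLemmas


section WedgeLemmas
variable {N : ℕ}

lemma span_sup_eq {Vτ Vσ : Submodule ℝ (Fin N → ℝ)} (hle : Vτ ≤ Vσ)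
    (hfr : Module.finrank ℝ Vτ + 1 = Module.finrank ℝ Vσ)
    {v : Fin N → ℝ} (hv : v ∈ Vσ) (hvn : v ∉ Vτ) :
    Vτ ⊔ Submodule.span ℝ {v} = Vσ := by
  have hWle : Vτ ⊔ Submodule.span ℝ {v} ≤ Vσ :=
    sup_le hle (by rwa [Submodule.span_singleton_le_iff_mem])
  have hlt : Vτ < Vτ ⊔ Submodule.span ℝ {v} := by
    apply lt_of_le_of_ne le_sup_left
    intro heq
    apply hvn
    rw [heq]
    exact (le_sup_right : Submodule.span ℝ {v} ≤ _) (Submodule.mem_span_singleton_self v)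
  have h1 := Submodule.finrank_lt_finrank_of_lt (lt_of_lt_of_le hlt hWle)
  have h2 := Submodule.finrank_lt_finrank_of_lt
    (lt_of_lt_of_le hlt (le_refl (Vτ ⊔ Submodule.span ℝ {v})))
  exact Submodule.eq_of_le_of_finrank_le hWle (by omega)

lemma ker_inf_vanish {Vτ Vσ : Submodule ℝ (Fin N → ℝ)} {f : (Fin N → ℝ) →ₗ[ℝ] ℝ}
    (hfker : LinearMap.ker f ⊓ Vσ = Vτ) : ∀ u ∈ Vτ, f u = 0 := by
  intro u hu
  have : u ∈ LinearMap.ker f ⊓ Vσ := hfker.symm.le hu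
  exact LinearMap.mem_ker.1 this.1

/-- membership of a relative ball of the affine span of a cone member -/
lemma ball_mem_of_relint {τ : Set (Fin N → ℝ)} (h0 : (0 : Fin N → ℝ) ∈ τ)
    {x0 : Fin N → ℝ} (hx0 : x0 ∈ intrinsicInterior ℝ τ) :
    ∃ ε > 0, ∀ u ∈ vectorSpan ℝ τ, ‖u‖ < ε → x0 + u ∈ τ := by
  obtain ⟨hx0τ, ε, hε, hball⟩ := mem_intrinsicInterior_iff.1 hx0
  refine ⟨ε, hε, fun u hu hnorm => ?_⟩
  apply hball
  · rw [affineSpan_coe_eq h0]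
    exact Submodule.add_mem _ (subset_vectorSpan h0 hx0τ) hu
  · rw [dist_eq_norm]
    simpa using hnorm

set_option maxHeartbeats 1000000 in
/-- a polyhedron of a fan having a codimension-one member in its relative boundary lies
(weakly) on one side of any linear form cutting out that member. -/
lemma cone_one_side {Z : WComplex N} (hZ : Z.IsFan) {τ σ : Set (Fin N → ℝ)}
    (hτ : τ ∈ Z.polys) (hσ : σ ∈ Z.polys) (hsub : τ ⊆ σ) (hne : τ ≠ σ)
    {x0 : Fin N → ℝ} (hx0 : x0 ∈ intrinsicInterior ℝ τ)
    {f : (Fin N → ℝ) →ₗ[ℝ] ℝ} (hfker : LinearMap.ker f ⊓ vectorSpan ℝ σ = vectorSpan ℝ τ) :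
    (∀ y ∈ σ, 0 ≤ f y) ∨ (∀ y ∈ σ, f y ≤ 0) := by
  by_contra hcon
  push_neg at hcon
  obtain ⟨⟨pm, hpmσ, hfpm⟩, pp, hppσ, hfpp⟩ := hcon
  have hf0 : ∀ u ∈ vectorSpan ℝ τ, f u = 0 := ker_inf_vanish hfker
  have hx0τ : x0 ∈ τ := intrinsicInterior_subset hx0
  set F := LinearMap.toContinuousLinearMap f with hF
  set Cf : ℝ := ‖F‖ with hCf
  have hCf0 : 0 ≤ Cf := norm_nonneg _
  have hfbound : ∀ h : Fin N → ℝ, |f h| ≤ Cf * ‖h‖ := by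
    intro h
    have := F.le_opNorm h
    simpa [hF, Real.norm_eq_abs] using this
  set m : ℝ := min (f pp) (-(f pm)) with hm
  have hm0 : 0 < m := lt_min hfpp (by linarith)
  set K : ℝ := 1 + Cf * (‖pp‖ + ‖pm‖) / m with hK
  have hK1 : 1 ≤ K := by
    rw [hK]
    have : 0 ≤ Cf * (‖pp‖ + ‖pm‖) / m := by positivity
    linarith
  obtain ⟨ε, hε, hball⟩ := ball_mem_of_relint (hZ τ hτ).zero_mem hx0
  have hx0σii : x0 ∈ intrinsicInterior ℝ σ := by
    rw [mem_intrinsicInterior_iff]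
    refine ⟨hsub hx0τ, ε / K, by positivity, fun y hy hd => ?_⟩
    rw [affineSpan_coe_eq (hZ σ hσ).zero_mem] at hy
    set h : Fin N → ℝ := y - x0 with hh
    have hhV : h ∈ vectorSpan ℝ σ := by
      apply Submodule.sub_mem _ hy
      exact subset_vectorSpan (hZ σ hσ).zero_mem (hsub hx0τ)
    have hhnorm : ‖h‖ < ε / K := by rw [hh, ← dist_eq_norm]; exact hd
    have main : ∀ q : Fin N → ℝ, q ∈ σ → m ≤ |f q| → ‖q‖ ≤ ‖pp‖ + ‖pm‖ →
        0 ≤ f h / f q → y ∈ σ := by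
      intro q hqσ hfqm hqnorm hcpos
      have hfqne : f q ≠ 0 := by
        intro h0
        rw [h0, abs_zero] at hfqm
        linarith
      set c : ℝ := f h / f q with hc
      set u : Fin N → ℝ := h - c • q with hu
      have hfu : f u = 0 := by
        rw [hu, map_sub, map_smul, smul_eq_mul, hc]
        field_simp
        ring
      have huV : u ∈ vectorSpan ℝ τ := by
        rw [← hfker]
        refine Submodule.mem_inf.2 ⟨LinearMap.mem_ker.2 hfu, ?_⟩
        rw [hu]
        exact Submodule.sub_mem _ hhV
          (Submodule.smul_mem _ _ (subset_vectorSpan (hZ σ hσ).zero_mem hqσ))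
      have hcle : c ≤ Cf * ‖h‖ / m := by
        have h1 : c = |f h| / |f q| := by
          rw [← abs_div, abs_of_nonneg hcpos]
        rw [h1]
        exact div_le_div₀ (by positivity) (hfbound h) hm0 hfqm
      have hunorm : ‖u‖ < ε := by
        have h1 : ‖u‖ ≤ ‖h‖ + c * ‖q‖ := by
          rw [hu]
          calc ‖h - c • q‖ ≤ ‖h‖ + ‖c • q‖ := norm_sub_le _ _
          _ = ‖h‖ + |c| * ‖q‖ := by rw [norm_smul, Real.norm_eq_abs]
          _ = ‖h‖ + c * ‖q‖ := by rw [abs_of_nonneg hcpos]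
        have h2 : c * ‖q‖ ≤ (Cf * ‖h‖ / m) * (‖pp‖ + ‖pm‖) := by
          apply mul_le_mul hcle hqnorm (norm_nonneg _) (by positivity)
        have h3 : ‖h‖ + (Cf * ‖h‖ / m) * (‖pp‖ + ‖pm‖) = ‖h‖ * K := by
          rw [hK]
          field_simp
        have h4 : ‖h‖ * K < (ε / K) * K := by
          apply mul_lt_mul_of_pos_right hhnorm
          linarith
        have h5 : (ε / K) * K = ε := by
          field_simp
        linarith
      have hx0u : x0 + u ∈ τ := hball u huV hunorm
      have hyq : y = (x0 + u) + c • q := by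
        have : h = u + c • q := by rw [hu]; abel
        have hy' : y = x0 + h := by rw [hh]; abel
        rw [hy', this]
        abel
      rw [hyq]
      exact (hZ σ hσ).add_mem (hsub hx0u) ((hZ σ hσ).smul_mem hcpos hqσ)
    by_cases hsign : 0 ≤ f h
    · apply main pp hppσ ?_ (by nlinarith [norm_nonneg pm]) ?_
      · rw [abs_of_pos hfpp]
        exact min_le_left _ _
      · exact div_nonneg hsign hfpp.le
    · apply main pm hpmσ ?_ (by nlinarith [norm_nonneg pp]) ?_
      · rw [abs_of_neg hfpm]
        exact min_le_right _ _
      · rw [div_nonneg_iff]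
        right
        exact ⟨(not_le.1 hsign).le, hfpm.le⟩
  obtain ⟨τ', -, huniq⟩ := Z.decomp σ hσ x0 (hsub hx0τ)
  exact hne ((huniq τ ⟨hτ, hsub, hx0⟩).trans (huniq σ ⟨hσ, subset_rfl, hx0σii⟩).symm)

set_option maxHeartbeats 1000000 in
/-- two polyhedra of a fan above a common codimension-one member, with the same span,
lying on the same side, coincide. -/
lemma same_side_eq {Z : WComplex N} (hZ : Z.IsFan) {τ σ1 σ2 : Set (Fin N → ℝ)}
    (hτ : τ ∈ Z.polys) (hσ1 : σ1 ∈ Z.polys) (hσ2 : σ2 ∈ Z.polys)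
    (hsub1 : τ ⊆ σ1) (hsub2 : τ ⊆ σ2) (hV : vectorSpan ℝ σ1 = vectorSpan ℝ σ2)
    (hd1 : polyDim τ + 1 = polyDim σ1)
    {x0 : Fin N → ℝ} (hx0 : x0 ∈ intrinsicInterior ℝ τ)
    {f : (Fin N → ℝ) →ₗ[ℝ] ℝ}
    (hfker : LinearMap.ker f ⊓ vectorSpan ℝ σ1 = vectorSpan ℝ τ)
    (hf1 : ∀ y ∈ σ1, 0 ≤ f y) (hf2 : ∀ y ∈ σ2, 0 ≤ f y) : σ1 = σ2 := by
  have hf0 : ∀ u ∈ vectorSpan ℝ τ, f u = 0 := ker_inf_vanish hfker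
  have hx0τ : x0 ∈ τ := intrinsicInterior_subset hx0
  have hfne1 : ∃ v ∈ vectorSpan ℝ σ1, f v ≠ 0 := by
    by_contra hcon
    push_neg at hcon
    have : vectorSpan ℝ σ1 = vectorSpan ℝ τ := by
      rw [← hfker]
      apply le_antisymm
      · exact le_inf (fun z hz => LinearMap.mem_ker.2 (hcon z hz)) (le_refl _)
      · exact inf_le_right
    have h2 : polyDim σ1 = polyDim τ := by unfold polyDim; rw [this]
    omega
  obtain ⟨z1, hz1σ, hfz1⟩ := exists_pos_on_cone (hZ σ1 hσ1).zero_mem hf1 hfne1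
  obtain ⟨z2, hz2σ, hfz2⟩ := exists_pos_on_cone (hZ σ2 hσ2).zero_mem hf2 (hV ▸ hfne1)
  have hz2V1 : z2 ∈ vectorSpan ℝ σ1 := by
    rw [hV]
    exact subset_vectorSpan (hZ σ2 hσ2).zero_mem hz2σ
  set c : ℝ := f z2 / f z1 with hc
  have hc0 : 0 < c := div_pos hfz2 hfz1
  set u : Fin N → ℝ := z2 - c • z1 with hu
  have hz2eq : z2 = u + c • z1 := by rw [hu]; abel
  have hfu : f u = 0 := by
    rw [hu, map_sub, map_smul, smul_eq_mul, hc]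
    field_simp
    ring
  have huV : u ∈ vectorSpan ℝ τ := by
    rw [← hfker]
    refine Submodule.mem_inf.2 ⟨LinearMap.mem_ker.2 hfu, ?_⟩
    rw [hu]
    exact Submodule.sub_mem _ hz2V1
      (Submodule.smul_mem _ _ (subset_vectorSpan (hZ σ1 hσ1).zero_mem hz1σ))
  obtain ⟨ε, hε, hball⟩ := ball_mem_of_relint (hZ τ hτ).zero_mem hx0
  set sb : ℝ := ε / (2 * (‖u‖ + 1)) with hsb
  have hsb0 : 0 < sb := by positivity
  -- the common wedge
  have hmem : ∀ s : ℝ, 0 ≤ s → s ≤ sb → ∀ w ∈ vectorSpan ℝ τ, ‖w‖ < ε / 2 →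
      x0 + w + s • z2 ∈ σ1 ∩ σ2 := by
    intro s hs0 hssb w hwV hwn
    constructor
    · have h1 : x0 + (w + s • u) ∈ τ := by
        apply hball
        · exact Submodule.add_mem _ hwV (Submodule.smul_mem _ _ huV)
        · have : ‖w + s • u‖ ≤ ‖w‖ + s * ‖u‖ := by
            calc ‖w + s • u‖ ≤ ‖w‖ + ‖s • u‖ := norm_add_le _ _
            _ = ‖w‖ + |s| * ‖u‖ := by rw [norm_smul, Real.norm_eq_abs]
            _ = ‖w‖ + s * ‖u‖ := by rw [abs_of_nonneg hs0]
          have h2 : s * ‖u‖ ≤ sb * ‖u‖ := mul_le_mul_of_nonneg_right hssb (norm_nonneg _)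
          have h3 : sb * ‖u‖ < ε / 2 := by
            rw [hsb]
            rw [div_mul_eq_mul_div, div_lt_iff₀ (by positivity)]
            nlinarith [norm_nonneg u]
          linarith
      have heq : x0 + w + s • z2 = (x0 + (w + s • u)) + (s * c) • z1 := by
        rw [hz2eq, smul_add, smul_smul]
        abel
      rw [heq]
      exact (hZ σ1 hσ1).add_mem (hsub1 h1)
        ((hZ σ1 hσ1).smul_mem (by positivity) hz1σ)
    · have h1 : x0 + w ∈ τ := by
        apply hball w hwV
        linarith
      have heq : x0 + w + s • z2 = (x0 + w) + s • z2 := by abel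
      rw [heq]
      exact (hZ σ2 hσ2).add_mem (hsub2 h1) ((hZ σ2 hσ2).smul_mem hs0 hz2σ)
  have hx0mem : x0 ∈ σ1 ∩ σ2 := ⟨hsub1 hx0τ, hsub2 hx0τ⟩
  have hx0mem' : x0 + (0:Fin N → ℝ) + (0:ℝ) • z2 ∈ σ1 ∩ σ2 := by
    simpa using hx0mem
  -- the span of the intersection contains V_τ and z2
  have hVτle : vectorSpan ℝ τ ≤ vectorSpan ℝ (σ1 ∩ σ2) := by
    intro v hv
    by_cases hv0 : v = 0
    · rw [hv0]; exact Submodule.zero_mem _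
    · have hvn : 0 < ‖v‖ := norm_pos_iff.2 hv0
      have h4v : 0 < 4 * ‖v‖ := by linarith
      have hcw : 0 < ε / (4 * ‖v‖) := div_pos hε h4v
      set w : Fin N → ℝ := (ε / (4 * ‖v‖)) • v with hw
      have hwV : w ∈ vectorSpan ℝ τ := Submodule.smul_mem _ _ hv
      have hwnorm : ‖w‖ < ε / 2 := by
        rw [hw, norm_smul, Real.norm_eq_abs, abs_of_pos hcw]
        rw [div_mul_eq_mul_div, div_lt_iff₀ h4v]
        nlinarith
      have hmem1 : x0 + w + (0:ℝ) • z2 ∈ σ1 ∩ σ2 := hmem 0 le_rfl hsb0.le w hwV hwnorm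
      have hvs : (x0 + w + (0:ℝ) • z2) -ᵥ (x0 + (0:Fin N → ℝ) + (0:ℝ) • z2)
          ∈ vectorSpan ℝ (σ1 ∩ σ2) := vsub_mem_vectorSpan ℝ hmem1 hx0mem'
      have heq : (x0 + w + (0:ℝ) • z2) -ᵥ (x0 + (0:Fin N → ℝ) + (0:ℝ) • z2) = w := by
        simp only [vsub_eq_sub, zero_smul, add_zero]
        abel
      rw [heq] at hvs
      have := Submodule.smul_mem _ (ε / (4 * ‖v‖))⁻¹ hvs
      rw [hw, smul_smul, inv_mul_cancel₀ hcw.ne', one_smul] at this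
      exact this
  have hz2le : z2 ∈ vectorSpan ℝ (σ1 ∩ σ2) := by
    have hmem1 : x0 + (0:Fin N → ℝ) + sb • z2 ∈ σ1 ∩ σ2 :=
      hmem sb hsb0.le le_rfl 0 (Submodule.zero_mem _) (by simp; positivity)
    have hvs : (x0 + (0:Fin N → ℝ) + sb • z2) -ᵥ (x0 + (0:Fin N → ℝ) + (0:ℝ) • z2)
        ∈ vectorSpan ℝ (σ1 ∩ σ2) := vsub_mem_vectorSpan ℝ hmem1 hx0mem'
    have heq : (x0 + (0:Fin N → ℝ) + sb • z2) -ᵥ (x0 + (0:Fin N → ℝ) + (0:ℝ) • z2)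
        = sb • z2 := by
      simp only [vsub_eq_sub, zero_smul, add_zero]
      abel
    rw [heq] at hvs
    have := Submodule.smul_mem _ sb⁻¹ hvs
    rwa [smul_smul, inv_mul_cancel₀ hsb0.ne', one_smul] at this
  -- hence the span of the intersection is V_σ1
  have hz2nτ : z2 ∉ vectorSpan ℝ τ := by
    intro h
    rw [hf0 z2 h] at hfz2
    exact lt_irrefl _ hfz2
  have hVle : vectorSpan ℝ σ1 ≤ vectorSpan ℝ (σ1 ∩ σ2) := by
    rw [← span_sup_eq (vectorSpan_mono ℝ hsub1) hd1 hz2V1 hz2nτ]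
    · exact sup_le hVτle (by rwa [Submodule.span_singleton_le_iff_mem])
  -- conclude by dimension comparison
  have hpoly : σ1 ∩ σ2 ∈ Z.polys := Z.inter_mem σ1 hσ1 σ2 hσ2 ⟨x0, hx0mem⟩
  have hd12 : polyDim σ1 = polyDim σ2 := by
    unfold polyDim
    rw [hV]
  have he1 : σ1 ∩ σ2 = σ1 := by
    apply Z.eq_of_subset_of_dim_le hZ hpoly hσ1 Set.inter_subset_left
    exact Submodule.finrank_mono hVle
  have he2 : σ1 ∩ σ2 = σ2 := by
    apply Z.eq_of_subset_of_dim_le hZ hpoly hσ2 Set.inter_subset_right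
    rw [← hd12]
    exact Submodule.finrank_mono hVle
  rw [← he1, he2]

end WedgeLemmas


section RefineLemmas
variable {N : ℕ}

lemma WComplex.mem_facetsAbove {Z : WComplex N} {τ σ : Set (Fin N → ℝ)} :
    σ ∈ Z.facetsAbove τ ↔ σ ∈ Z.polys ∧ polyDim σ = Z.dim ∧ τ ⊆ σ ∧ τ ≠ σ := by
  unfold WComplex.facetsAbove WComplex.polysFinset
  rw [Finset.mem_filter, Set.Finite.mem_toFinset]

lemma relint_mono_of_affineSpan_eq {A B : Set (Fin N → ℝ)} (hAB : A ⊆ B)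
    (haff : (affineSpan ℝ A : Set (Fin N → ℝ)) = affineSpan ℝ B)
    {x : Fin N → ℝ} (hx : x ∈ intrinsicInterior ℝ A) : x ∈ intrinsicInterior ℝ B := by
  rw [mem_intrinsicInterior_iff] at hx ⊢
  obtain ⟨hxA, ε, hε, hball⟩ := hx
  exact ⟨hAB hxA, ε, hε, fun y hy hd => hAB (hball y (haff ▸ hy) hd)⟩

/-- the span of a codimension one polyhedron of `Y` equals the span of the minimal
polyhedron of `X` at a common relative interior point. -/
lemma veq {X Y : WComplex N} (hX : X.IsFan) (hY : Y.IsFan) (h : Refines Y X)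
    {τ ρ : Set (Fin N → ℝ)} (hτ : τ ∈ Y.polys) (hρ : ρ ∈ X.polys)
    (hτstar : τ ∈ Y.starPolys)
    {x0 : Fin N → ℝ} (hx0τ : x0 ∈ intrinsicInterior ℝ τ) (hx0ρ : x0 ∈ intrinsicInterior ℝ ρ)
    (hdτ : polyDim τ + 1 = X.dim) (hdρ : polyDim ρ + 1 = X.dim) :
    vectorSpan ℝ τ = vectorSpan ℝ ρ := by
  have hx0τ' : x0 ∈ τ := intrinsicInterior_subset hx0τ
  have hx0ρ' : x0 ∈ ρ := intrinsicInterior_subset hx0ρ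
  -- the least star polyhedron of X containing τ
  obtain ⟨D, hD, hτD⟩ := h.1 τ hτstar
  obtain ⟨M, hMstar, hτM, hMleast⟩ := X.exists_least_star ⟨x0, hx0τ'⟩ ⟨D, hD, hτD⟩
  have hM : M ∈ X.polys := hMstar.1
  have hx0M : x0 ∈ M := hτM hx0τ'
  have hρM : ρ ⊆ M := WComplex.min_cone hρ hM hx0ρ hx0M
  have hMdim : polyDim M ≤ X.dim := (X.pure M hM).1
  by_cases hcase : polyDim M ≤ polyDim ρ
  · -- M = ρ, so τ ⊆ ρ
    have heq : ρ = M := X.eq_of_subset_of_dim_le hX hρ hM hρM hcase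
    have hτρ : τ ⊆ ρ := heq ▸ hτM
    exact Submodule.eq_of_le_of_finrank_le (vectorSpan_mono ℝ hτρ) (by
      show polyDim ρ ≤ polyDim τ
      omega)
  · -- M is a facet above ρ; use the separating form
    push_neg at hcase
    have hMdim' : polyDim ρ + 1 = polyDim M := by omega
    have hρM' : ρ ≠ M := by
      intro heq
      rw [heq] at hMdim'
      omega
    obtain ⟨v, l, hPN, hlpos, hlzero, hlker, hlv⟩ :=
      WComplex.exists_primitive_normal hX hρ hM hρM hρM' hMdim'
    -- l vanishes on τ
    have hlτ : ∀ y ∈ τ, evalFormL l y = 0 := by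
      apply eq_zero_on_of_relint (f := evalFormL l) (fun y hy => hlpos y (hτM hy)) hx0τ
      exact hlzero x0 hx0ρ'
    have hVτle : vectorSpan ℝ τ ≤ LinearMap.ker (evalFormL l) ⊓ vectorSpan ℝ M := by
      apply le_inf
      · rw [vectorSpan_eq_span (hY τ hτ).zero_mem, Submodule.span_le]
        intro y hy
        rw [SetLike.mem_coe, LinearMap.mem_ker]
        exact hlτ y hy
      · exact vectorSpan_mono ℝ hτM
    rw [hlker] at hVτle
    exact Submodule.eq_of_le_of_finrank_le hVτle (by
      show polyDim ρ ≤ polyDim τ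
      omega)

end RefineLemmas


section CoreTransfer
variable {N : ℕ}

set_option maxHeartbeats 2000000 in
/-- transfer of the weighted sum of primitive normals between a codimension-one
polyhedron `τ` of a refinement `Y` and the corresponding codimension-one polyhedron
`ρ` of `X` at a common generic relative interior point. -/
lemma core_transfer {X Y : WComplex N} (hX : X.IsFan) (hY : Y.IsFan)
    (hdim : Y.dim = X.dim) (h : Refines Y X)
    {τ ρ : Set (Fin N → ℝ)} (hτ : τ ∈ Y.polys) (hρ : ρ ∈ X.polys)
    (hτstar : τ ∈ Y.starPolys)
    {x0 : Fin N → ℝ} (hx0τ : x0 ∈ intrinsicInterior ℝ τ) (hx0ρ : x0 ∈ intrinsicInterior ℝ ρ)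
    (hdτ : polyDim τ + 1 = X.dim) (hdρ : polyDim ρ + 1 = X.dim)
    (hVeq : vectorSpan ℝ τ = vectorSpan ℝ ρ)
    {vY vX : Set (Fin N → ℝ) → (Fin N → ℤ)}
    (hvY : ∀ σ ∈ Y.facetsAbove τ, IsPrimitiveNormal τ σ (vY σ))
    (hvX : ∀ ν ∈ X.facetsAbove ρ, IsPrimitiveNormal ρ ν (vX ν)) :
    toReal (∑ σ ∈ Y.facetsAbove τ, Y.weight σ • vY σ)
      - toReal (∑ ν ∈ X.facetsAbove ρ, X.weight ν • vX ν) ∈ vectorSpan ℝ τ := by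
  classical
  have hx0τ' : x0 ∈ τ := intrinsicInterior_subset hx0τ
  have hx0ρ' : x0 ∈ ρ := intrinsicInterior_subset hx0ρ
  set A := (Y.facetsAbove τ).filter (fun σ => Y.weight σ ≠ 0) with hA
  set B := (X.facetsAbove ρ).filter (fun ν => X.weight ν ≠ 0) with hB
  have hmemA : ∀ σ ∈ A, σ ∈ Y.polys ∧ polyDim σ = Y.dim ∧ τ ⊆ σ ∧ τ ≠ σ ∧
      Y.weight σ ≠ 0 ∧ σ ∈ Y.facetsAbove τ := by
    intro σ hσ
    rw [hA, Finset.mem_filter] at hσ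
    obtain ⟨hFA, hw⟩ := hσ
    obtain ⟨h1, h2, h3, h4⟩ := WComplex.mem_facetsAbove.1 hFA
    exact ⟨h1, h2, h3, h4, hw, hFA⟩
  have hmemB : ∀ ν ∈ B, ν ∈ X.polys ∧ polyDim ν = X.dim ∧ ρ ⊆ ν ∧ ρ ≠ ν ∧
      X.weight ν ≠ 0 ∧ ν ∈ X.facetsAbove ρ := by
    intro ν hν
    rw [hB, Finset.mem_filter] at hν
    obtain ⟨hFA, hw⟩ := hν
    obtain ⟨h1, h2, h3, h4⟩ := WComplex.mem_facetsAbove.1 hFA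
    exact ⟨h1, h2, h3, h4, hw, hFA⟩
  -- the least star polyhedron of X above each nonzero facet of Y above τ
  have key : ∀ σ ∈ A, ∃ ν, ν ∈ X.starPolys ∧ σ ⊆ ν ∧
      ∀ D ∈ X.starPolys, σ ⊆ D → ν ⊆ D := by
    intro σ hσA
    obtain ⟨hσp, hσd, hτσ, hτne, hσw, -⟩ := hmemA σ hσA
    have hσstar : σ ∈ Y.starPolys := ⟨hσp, σ, hσp, hσd, hσw, subset_rfl⟩
    obtain ⟨D, hD, hσD⟩ := h.1 σ hσstar
    obtain ⟨M, hM1, hM2, hM3⟩ := X.exists_least_star (Y.nonempty_mem σ hσp) ⟨D, hD, hσD⟩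
    exact ⟨M, hM1, hM2, hM3⟩
  choose Φ hΦ using key
  -- basic facts
  have hfacts : ∀ σ (hσ : σ ∈ A), Φ σ hσ ∈ B ∧ ρ ⊆ Φ σ hσ ∧ ρ ≠ Φ σ hσ ∧
      polyDim ρ + 1 = polyDim (Φ σ hσ) ∧ X.weight (Φ σ hσ) = Y.weight σ ∧
      vectorSpan ℝ σ = vectorSpan ℝ (Φ σ hσ) ∧ σ ⊆ Φ σ hσ ∧
      Φ σ hσ ∈ X.facetsAbove ρ := by
    intro σ hσ
    obtain ⟨hσp, hσd, hτσ, hτne, hσw, hσFA⟩ := hmemA σ hσ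
    obtain ⟨hνstar, hσν, hνleast⟩ := hΦ σ hσ
    set ν := Φ σ hσ with hνdef
    have hνp : ν ∈ X.polys := hνstar.1
    have hx0ν : x0 ∈ ν := hσν (hτσ hx0τ')
    have hρν : ρ ⊆ ν := WComplex.min_cone hρ hνp hx0ρ hx0ν
    have hνd : polyDim ν = X.dim := by
      have h1 : polyDim ν ≤ X.dim := (X.pure ν hνp).1
      have h2 : polyDim σ ≤ polyDim ν := Submodule.finrank_mono (vectorSpan_mono ℝ hσν)
      omega
    have hρνne : ρ ≠ ν := by
      intro heq
      rw [heq] at hdρ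
      omega
    have hνFA : ν ∈ X.facetsAbove ρ := WComplex.mem_facetsAbove.2 ⟨hνp, hνd, hρν, hρνne⟩
    have hσstar : σ ∈ Y.starPolys := ⟨hσp, σ, hσp, hσd, hσw, subset_rfl⟩
    have hwt : Y.weight σ = X.weight ν := h.2.2 σ hσstar hσd ν ⟨hνstar, hσν, hνleast⟩
    have hνB : ν ∈ B := by
      rw [hB, Finset.mem_filter]
      exact ⟨hνFA, by rw [← hwt]; exact hσw⟩
    have hVσν : vectorSpan ℝ σ = vectorSpan ℝ ν := by
      apply Submodule.eq_of_le_of_finrank_le (vectorSpan_mono ℝ hσν)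
      show polyDim ν ≤ polyDim σ
      omega
    exact ⟨hνB, hρν, hρνne, by omega, hwt.symm, hVσν, hσν, hνFA⟩
  -- matching of primitive normals
  have hmatch : ∀ σ (hσ : σ ∈ A), toReal (vX (Φ σ hσ) - vY σ) ∈ vectorSpan ℝ τ := by
    intro σ hσ
    obtain ⟨hσp, hσd, hτσ, hτne, hσw, hσFA⟩ := hmemA σ hσ
    obtain ⟨hνB, hρν, hρνne, hνd1, hwt, hVσν, hσν, hνFA⟩ := hfacts σ hσ
    set ν := Φ σ hσ with hνdef
    have hνp : ν ∈ X.polys := (hmemB ν hνB).1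
    obtain ⟨v', l, hPN', hlpos, hlzero, hlker, hlv'⟩ :=
      WComplex.exists_primitive_normal hX hρ hνp hρν hρνne hνd1
    set f := evalFormL l with hf
    have hf0ρ : ∀ u ∈ vectorSpan ℝ ρ, f u = 0 := ker_inf_vanish hlker
    have hf0τ : ∀ u ∈ vectorSpan ℝ τ, f u = 0 := fun u hu => hf0ρ u (hVeq ▸ hu)
    have hfneν : ∃ z ∈ vectorSpan ℝ ν, f z ≠ 0 := by
      refine ⟨toReal v', hPN'.1, ?_⟩
      rw [hf, evalFormL_apply, evalForm_toReal]
      exact_mod_cast hlv'.ne'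
    have hlpos' : ∀ y ∈ ν, 0 ≤ f y := fun y hy => hlpos y hy
    have hposX : 0 < f (toReal (vX ν)) :=
      primitive_pos hX hρ hνp hρν hνd1 (hvX ν hνFA) hf0ρ hlpos' hfneν
    have hdτσ : polyDim τ + 1 = polyDim σ := by omega
    have hposY : 0 < f (toReal (vY σ)) := by
      apply primitive_pos hY hτ hσp hτσ hdτσ (hvY σ hσFA) hf0τ
      · intro y hy; exact hlpos' y (hσν hy)
      · rw [hVσν]; exact hfneν
    exact primitive_match hVeq hVσν (hvY σ hσFA) (hvX ν hνFA) hf0τ hposY hposX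
  -- injectivity
  have hinj : ∀ σ1 (h1 : σ1 ∈ A), ∀ σ2 (h2 : σ2 ∈ A), Φ σ1 h1 = Φ σ2 h2 → σ1 = σ2 := by
    intro σ1 h1 σ2 h2 heq
    obtain ⟨hσ1p, hσ1d, hτσ1, hτne1, hσ1w, hσ1FA⟩ := hmemA σ1 h1
    obtain ⟨hσ2p, hσ2d, hτσ2, hτne2, hσ2w, hσ2FA⟩ := hmemA σ2 h2
    obtain ⟨hνB, hρν, hρνne, hνd1, hwt, hVσν, hσν, hνFA⟩ := hfacts σ1 h1
    obtain ⟨hνB2, hρν2, hρνne2, hνd12, hwt2, hVσν2, hσν2, hνFA2⟩ := hfacts σ2 h2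
    set ν := Φ σ1 h1 with hνdef
    have hνp : ν ∈ X.polys := (hmemB ν hνB).1
    obtain ⟨v', l, hPN', hlpos, hlzero, hlker, hlv'⟩ :=
      WComplex.exists_primitive_normal hX hρ hνp hρν hρνne hνd1
    set f := evalFormL l with hf
    have hVσσ : vectorSpan ℝ σ1 = vectorSpan ℝ σ2 := by
      rw [hVσν, hVσν2, ← heq]
    have hdτσ : polyDim τ + 1 = polyDim σ1 := by omega
    apply same_side_eq hY hτ hσ1p hσ2p hτσ1 hτσ2 hVσσ hdτσ hx0τ
      (f := f) ?_ ?_ ?_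
    · rw [hVσν, hlker, hVeq]
    · intro y hy; exact hlpos y (hσν hy)
    · intro y hy
      rw [← heq] at hσν2
      exact hlpos y (hσν2 hy)
  -- surjectivity
  have hsurj : ∀ ν ∈ B, ∃ σ, ∃ (hσ : σ ∈ A), Φ σ hσ = ν := by
    intro ν hνB
    obtain ⟨hνp, hνd, hρν, hρνne, hνw, hνFA⟩ := hmemB ν hνB
    have hνstar : ν ∈ X.starPolys := ⟨hνp, ν, hνp, hνd, hνw, subset_rfl⟩
    obtain ⟨y1, hy1⟩ := Set.Nonempty.intrinsicInterior (hX ν hνp).convex (X.nonempty_mem ν hνp)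
    have hx0ν : x0 ∈ ν := hρν hx0ρ'
    set xs : ℕ → Fin N → ℝ := fun n => x0 + (1/(n+1:ℝ)) • (y1 - x0) with hxs
    have hxsν : ∀ n : ℕ, xs n ∈ intrinsicInterior ℝ ν := by
      intro n
      apply relint_segment (hX ν hνp).convex hx0ν hy1
      · positivity
      · rw [div_le_one (by positivity)]
        have : (0:ℝ) ≤ n := Nat.cast_nonneg n
        linarith
    set S : Finset (Set (Fin N → ℝ)) :=
      Y.finite.toFinset.filter (fun C => C ∈ Y.starPolys) with hS
    have hxsY : ∀ n : ℕ, ∃ C ∈ S, xs n ∈ C := by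
      intro n
      have h1 : xs n ∈ X.starSupport := by
        exact ⟨ν, hνstar, intrinsicInterior_subset (hxsν n)⟩
      rw [← h.2.1] at h1
      obtain ⟨C, hC, hxC⟩ := h1
      refine ⟨C, ?_, hxC⟩
      rw [hS, Finset.mem_filter, Set.Finite.mem_toFinset]
      exact ⟨hC.1, hC⟩
    have hlim : Filter.Tendsto xs Filter.atTop (nhds x0) := by
      rw [hxs]
      have h1 : Filter.Tendsto (fun n : ℕ => (1/(n+1:ℝ))) Filter.atTop (nhds 0) :=
        tendsto_one_div_add_atTop_nhds_zero_nat
      have h2 := Filter.Tendsto.smul_const h1 (y1 - x0)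
      rw [zero_smul] at h2
      have h3 := Filter.Tendsto.const_add x0 h2
      simpa using h3
    obtain ⟨C, hCS, hx0C, n, hxnC⟩ := exists_closed_accum
      (fun C hC => by
        rw [hS, Finset.mem_filter, Set.Finite.mem_toFinset] at hC
        exact (hY C hC.1).isClosed) hxsY hlim
    have hCstar : C ∈ Y.starPolys := by
      rw [hS, Finset.mem_filter] at hCS
      exact hCS.2
    obtain ⟨hCp, σ', hσ'p, hσ'd, hσ'w, hCσ'⟩ := hCstar
    have hτσ' : τ ⊆ σ' := WComplex.min_cone hτ hσ'p hx0τ (hCσ' hx0C)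
    have hτσ'ne : τ ≠ σ' := by
      intro heq
      rw [heq] at hdτ
      rw [hσ'd, hdim] at hdτ
      omega
    have hσ'A : σ' ∈ A := by
      rw [hA, Finset.mem_filter]
      exact ⟨WComplex.mem_facetsAbove.2 ⟨hσ'p, hσ'd, hτσ', hτσ'ne⟩, hσ'w⟩
    obtain ⟨hν'star, hσ'ν', hleast'⟩ := hΦ σ' hσ'A
    have hνν' : ν ⊆ Φ σ' hσ'A :=
      WComplex.min_cone hνp hν'star.1 (hxsν n) (hσ'ν' (hCσ' hxnC))
    have hν'd : polyDim (Φ σ' hσ'A) ≤ X.dim := (X.pure _ hν'star.1).1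
    have : ν = Φ σ' hσ'A := by
      apply X.eq_of_subset_of_dim_le hX hνp hν'star.1 hνν'
      omega
    exact ⟨σ', hσ'A, this.symm⟩
  -- final computation
  have hsumY : ∑ σ ∈ Y.facetsAbove τ, Y.weight σ • vY σ = ∑ σ ∈ A, Y.weight σ • vY σ := by
    rw [hA]
    symm
    apply Finset.sum_filter_of_ne
    intro σ hσ hne h0
    apply hne
    rw [h0, zero_smul]
  have hsumX : ∑ ν ∈ X.facetsAbove ρ, X.weight ν • vX ν = ∑ ν ∈ B, X.weight ν • vX ν := by
    rw [hB]
    symm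
    apply Finset.sum_filter_of_ne
    intro ν hν hne h0
    apply hne
    rw [h0, zero_smul]
  set vXΦ : Set (Fin N → ℝ) → (Fin N → ℤ) :=
    fun σ => if hσ : σ ∈ A then vX (Φ σ hσ) else 0 with hvXΦ
  have htrans : ∑ ν ∈ B, X.weight ν • vX ν = ∑ σ ∈ A, Y.weight σ • vXΦ σ := by
    symm
    apply Finset.sum_bij (i := fun σ hσ => Φ σ hσ)
    · intro σ hσ
      exact (hfacts σ hσ).1
    · intro σ1 h1 σ2 h2 heq
      exact hinj σ1 h1 σ2 h2 heq
    · intro ν hν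
      exact hsurj ν hν
    · intro σ hσ
      simp only [hvXΦ]
      rw [dif_pos hσ, (hfacts σ hσ).2.2.2.2.1]
  rw [hsumY, hsumX, htrans]
  rw [← toReal_sub, ← Finset.sum_sub_distrib]
  have hterm : ∀ σ ∈ A, Y.weight σ • vY σ - Y.weight σ • vXΦ σ
      = Y.weight σ • (vY σ - vXΦ σ) := by
    intro σ hσ
    rw [smul_sub]
  rw [Finset.sum_congr rfl hterm, toReal_sum]
  apply Submodule.sum_mem
  intro σ hσ
  rw [toReal_intsmul]
  apply Submodule.smul_mem
  have h1 : toReal (vX (Φ σ hσ) - vY σ) ∈ vectorSpan ℝ τ := hmatch σ hσ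
  have h2 : vY σ - vXΦ σ = -(vX (Φ σ hσ) - vY σ) := by
    simp only [hvXΦ]
    rw [dif_pos hσ]
    abel
  rw [h2, toReal_neg]
  exact Submodule.neg_mem _ h1

end CoreTransfer


section CaseA
variable {N : ℕ}

lemma ker_neg_eq {f : (Fin N → ℝ) →ₗ[ℝ] ℝ} : LinearMap.ker (-f) = LinearMap.ker f := by
  ext x
  simp [LinearMap.mem_ker, neg_eq_zero]

set_option maxHeartbeats 2000000 in
/-- **Case A**: if the minimal polyhedron of `X` at a generic point of a
codimension-one polyhedron `τ` of the refinement `Y` is a facet, then `Y` is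
automatically balanced at `τ`. -/
lemma caseA {X Y : WComplex N} (hX : X.IsFan) (hY : Y.IsFan)
    (hdim : Y.dim = X.dim) (h : Refines Y X)
    {τ ρ : Set (Fin N → ℝ)} (hτ : τ ∈ Y.polys) (hρ : ρ ∈ X.polys)
    (hτstar : τ ∈ Y.starPolys)
    {x0 : Fin N → ℝ} (hx0τ : x0 ∈ intrinsicInterior ℝ τ) (hx0ρ : x0 ∈ intrinsicInterior ℝ ρ)
    (hdτ : polyDim τ + 1 = X.dim) (hdρ : polyDim ρ = X.dim)
    {vY : Set (Fin N → ℝ) → (Fin N → ℤ)}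
    (hvY : ∀ σ ∈ Y.facetsAbove τ, IsPrimitiveNormal τ σ (vY σ)) :
    toReal (∑ σ ∈ Y.facetsAbove τ, Y.weight σ • vY σ) ∈ vectorSpan ℝ τ := by
  classical
  have hx0τ' : x0 ∈ τ := intrinsicInterior_subset hx0τ
  have hx0ρ' : x0 ∈ ρ := intrinsicInterior_subset hx0ρ
  -- ρ is a star polyhedron of X
  obtain ⟨D, hD, hτD⟩ := h.1 τ hτstar
  have hρD : ρ ⊆ D := WComplex.min_cone hρ hD.1 hx0ρ (hτD hx0τ')
  have hρstar : ρ ∈ X.starPolys := by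
    obtain ⟨hDp, σX, hσX, hdX, hwX, hDσX⟩ := hD
    exact ⟨hρ, σX, hσX, hdX, hwX, hρD.trans hDσX⟩
  -- any nonzero facet of Y above τ is contained in ρ and has weight X.weight ρ
  have hfacet : ∀ σ, σ ∈ Y.facetsAbove τ → Y.weight σ ≠ 0 →
      σ ⊆ ρ ∧ Y.weight σ = X.weight ρ ∧ vectorSpan ℝ σ = vectorSpan ℝ ρ := by
    intro σ hσFA hσw
    obtain ⟨hσp, hσd, hτσ, hτne⟩ := WComplex.mem_facetsAbove.1 hσFA
    have hσstar : σ ∈ Y.starPolys := ⟨hσp, σ, hσp, hσd, hσw, subset_rfl⟩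
    obtain ⟨D', hD', hσD'⟩ := h.1 σ hσstar
    obtain ⟨M, hMstar, hσM, hMleast⟩ :=
      X.exists_least_star (Y.nonempty_mem σ hσp) ⟨D', hD', hσD'⟩
    have hx0M : x0 ∈ M := hσM (hτσ hx0τ')
    have hρM : ρ ⊆ M := WComplex.min_cone hρ hMstar.1 hx0ρ hx0M
    have hMd : polyDim M ≤ X.dim := (X.pure M hMstar.1).1
    have hρMeq : ρ = M := X.eq_of_subset_of_dim_le hX hρ hMstar.1 hρM (by omega)
    have hwt : Y.weight σ = X.weight M := h.2.2 σ hσstar hσd M ⟨hMstar, hσM, hMleast⟩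
    have hσρ : σ ⊆ ρ := by rw [hρMeq]; exact hσM
    refine ⟨hσρ, by rw [hρMeq]; exact hwt, ?_⟩
    apply Submodule.eq_of_le_of_finrank_le (vectorSpan_mono ℝ hσρ)
    show polyDim ρ ≤ polyDim σ
    omega
  -- a nonzero facet σs above τ
  obtain ⟨hτp, σs, hσsp, hσsd, hσsw, hτσs⟩ := hτstar
  have hτσsne : τ ≠ σs := by
    intro heq
    rw [heq] at hdτ
    omega
  have hσsFA : σs ∈ Y.facetsAbove τ := WComplex.mem_facetsAbove.2 ⟨hσsp, hσsd, hτσs, hτσsne⟩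
  obtain ⟨hσsρ, hσswt, hσsV⟩ := hfacet σs hσsFA hσsw
  -- the separating form at (τ, σs)
  have hdτσs : polyDim τ + 1 = polyDim σs := by omega
  obtain ⟨vs, l, hPNs, hlpos, hlzero, hlker, hlvs⟩ :=
    WComplex.exists_primitive_normal hY hτ hσsp hτσs hτσsne hdτσs
  set f := evalFormL l with hf
  have hfker_ρ : LinearMap.ker f ⊓ vectorSpan ℝ ρ = vectorSpan ℝ τ := by
    rw [← hσsV]; exact hlker
  have hf0τ : ∀ u ∈ vectorSpan ℝ τ, f u = 0 := ker_inf_vanish hlker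
  set z := toReal vs with hz
  have hzVs : z ∈ vectorSpan ℝ σs := hPNs.1
  have hzV : z ∈ vectorSpan ℝ ρ := by rw [← hσsV]; exact hzVs
  have hfz : 0 < f z := by
    rw [hf, evalFormL_apply, hz, evalForm_toReal]
    exact_mod_cast hlvs
  have hfx0 : f x0 = 0 := hlzero x0 hx0τ'
  -- points of ρ on the negative side of f, converging to x0
  obtain ⟨ε, hε, hball⟩ := ball_mem_of_relint (hX ρ hρ).zero_mem hx0ρ
  set c : ℝ := ε / (2 * (‖z‖ + 1)) with hc
  have hc0 : 0 < c := by positivity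
  set xs : ℕ → Fin N → ℝ := fun n => x0 + (c * (1/(n+1:ℝ))) • (-z) with hxs
  have htn : ∀ n : ℕ, 0 < c * (1/(n+1:ℝ)) ∧ c * (1/(n+1:ℝ)) ≤ c := by
    intro n
    constructor
    · positivity
    · have h1 : (1:ℝ)/(n+1:ℝ) ≤ 1 := by
        rw [div_le_one (by positivity)]
        have : (0:ℝ) ≤ n := Nat.cast_nonneg n
        linarith
      nlinarith
  have hxsρ : ∀ n, xs n ∈ ρ := by
    intro n
    apply hball
    · exact Submodule.smul_mem _ _ (Submodule.neg_mem _ hzV)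
    · rw [norm_smul, Real.norm_eq_abs, abs_of_pos (htn n).1, norm_neg]
      have h1 : c * (1/(n+1:ℝ)) * ‖z‖ ≤ c * ‖z‖ :=
        mul_le_mul_of_nonneg_right (htn n).2 (norm_nonneg _)
      have h2 : c * ‖z‖ < ε := by
        rw [hc]
        rw [div_mul_eq_mul_div, div_lt_iff₀ (by positivity)]
        nlinarith [norm_nonneg z]
      linarith
  have hxsneg : ∀ n, f (xs n) < 0 := by
    intro n
    rw [hxs]
    simp only [map_add, map_smul, map_neg, smul_eq_mul]
    rw [hfx0]
    have := (htn n).1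
    nlinarith
  -- pigeonhole: find a nonzero facet of Y above τ on the negative side
  set S : Finset (Set (Fin N → ℝ)) :=
    Y.finite.toFinset.filter (fun C => C ∈ Y.starPolys) with hS
  have hxsY : ∀ n : ℕ, ∃ C ∈ S, xs n ∈ C := by
    intro n
    have h1 : xs n ∈ X.starSupport := ⟨ρ, hρstar, hxsρ n⟩
    rw [← h.2.1] at h1
    obtain ⟨C, hC, hxC⟩ := h1
    refine ⟨C, ?_, hxC⟩
    rw [hS, Finset.mem_filter, Set.Finite.mem_toFinset]
    exact ⟨hC.1, hC⟩
  have hlim : Filter.Tendsto xs Filter.atTop (nhds x0) := by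
    rw [hxs]
    have h1 : Filter.Tendsto (fun n : ℕ => (1/(n+1:ℝ))) Filter.atTop (nhds 0) :=
      tendsto_one_div_add_atTop_nhds_zero_nat
    have h2 := (h1.const_mul c).smul_const (-z)
    rw [mul_zero, zero_smul] at h2
    have h3 := Filter.Tendsto.const_add x0 h2
    simpa using h3
  obtain ⟨C, hCS, hx0C, n, hxnC⟩ := exists_closed_accum
    (fun C hC => by
      rw [hS, Finset.mem_filter, Set.Finite.mem_toFinset] at hC
      exact (hY C hC.1).isClosed) hxsY hlim
  have hCstar : C ∈ Y.starPolys := by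
    rw [hS, Finset.mem_filter] at hCS
    exact hCS.2
  obtain ⟨hCp, σm, hσmp, hσmd, hσmw, hCσm⟩ := hCstar
  have hτσm : τ ⊆ σm := WComplex.min_cone hτ hσmp hx0τ (hCσm hx0C)
  have hτσmne : τ ≠ σm := by
    intro heq
    rw [heq] at hdτ
    omega
  have hσmFA : σm ∈ Y.facetsAbove τ := WComplex.mem_facetsAbove.2 ⟨hσmp, hσmd, hτσm, hτσmne⟩
  obtain ⟨hσmρ, hσmwt, hσmV⟩ := hfacet σm hσmFA hσmw
  have hxnσm : xs n ∈ σm := hCσm hxnC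
  -- σm lies on the negative side
  have hσmneg : ∀ y ∈ σm, f y ≤ 0 := by
    rcases cone_one_side hY hτ hσmp hτσm hτσmne hx0τ
      (f := f) (by rw [hσmV]; exact hfker_ρ) with hside | hside
    · exact absurd (hside _ hxnσm) (not_le.2 (hxsneg n))
    · exact hside
  have hσspos : ∀ y ∈ σs, 0 ≤ f y := fun y hy => hlpos y hy
  have hσsσm : σs ≠ σm := by
    intro heq
    have := hσspos _ (heq ▸ hxnσm)
    exact absurd this (not_le.2 (hxsneg n))
  -- dichotomy: every nonzero facet above τ is σs or σm
  have hdich : ∀ σ, σ ∈ Y.facetsAbove τ → Y.weight σ ≠ 0 → σ = σs ∨ σ = σm := by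
    intro σ hFA hw
    obtain ⟨hσρ', hσwt', hσV'⟩ := hfacet σ hFA hw
    obtain ⟨hσp, hσd, hτσ, hτne⟩ := WComplex.mem_facetsAbove.1 hFA
    have hdτσ : polyDim τ + 1 = polyDim σ := by omega
    rcases cone_one_side hY hτ hσp hτσ hτne hx0τ
      (f := f) (by rw [hσV']; exact hfker_ρ) with hside | hside
    · left
      exact same_side_eq hY hτ hσp hσsp hτσ hτσs (hσV'.trans hσsV.symm) hdτσ hx0τ
        (f := f) (by rw [hσV']; exact hfker_ρ) hside hσspos
    · right
      apply same_side_eq hY hτ hσp hσmp hτσ hτσm (hσV'.trans hσmV.symm) hdτσ hx0τ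
        (f := -f) ?_ ?_ ?_
      · rw [ker_neg_eq, hσV']
        exact hfker_ρ
      · intro y hy
        simpa using hside y hy
      · intro y hy
        simpa using hσmneg y hy
  -- the two primitive normals cancel
  have hfneρ : ∃ w ∈ vectorSpan ℝ ρ, f w ≠ 0 := ⟨z, hzV, hfz.ne'⟩
  have hposs : 0 < f (toReal (vY σs)) := by
    apply primitive_pos hY hτ hσsp hτσs hdτσs (hvY σs hσsFA) hf0τ hσspos
    rw [hσsV]
    exact hfneρ
  have hnegm : f (toReal (vY σm)) < 0 := by
    have hdτσm : polyDim τ + 1 = polyDim σm := by omega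
    have h1 : 0 < (-f) (toReal (vY σm)) := by
      apply primitive_pos hY hτ hσmp hτσm hdτσm (hvY σm hσmFA)
      · intro u hu
        simp [hf0τ u hu]
      · intro y hy
        simpa using hσmneg y hy
      · obtain ⟨w, hwV, hwne⟩ := hfneρ
        refine ⟨w, by rw [hσmV]; exact hwV, ?_⟩
        simpa using hwne
    simpa using h1
  have hopp : toReal (vY σm + vY σs) ∈ vectorSpan ℝ τ := by
    apply primitive_opp (τ := τ) (σ := σs) (ρ := τ) (ν := σm) rfl
      (hσsV.trans hσmV.symm) (hvY σs hσsFA) (hvY σm hσmFA) hf0τ hposs hnegm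
  -- final computation
  have hsum : ∑ σ ∈ Y.facetsAbove τ, Y.weight σ • vY σ
      = Y.weight σs • vY σs + Y.weight σm • vY σm := by
    have hsub : ({σs, σm} : Finset (Set (Fin N → ℝ))) ⊆ Y.facetsAbove τ := by
      intro x hx
      rcases Finset.mem_insert.1 hx with rfl | hx
      · exact hσsFA
      · rw [Finset.mem_singleton] at hx
        rw [hx]
        exact hσmFA
    rw [← Finset.sum_subset hsub]
    · rw [Finset.sum_insert (by rw [Finset.mem_singleton]; exact hσsσm),
        Finset.sum_singleton]
    · intro x hx hnx
      have hw : Y.weight x = 0 := by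
        by_contra hw
        rcases hdich x hx hw with rfl | rfl
        · exact hnx (Finset.mem_insert_self _ _)
        · exact hnx (Finset.mem_insert_of_mem (Finset.mem_singleton_self _))
      rw [hw, zero_smul]
  rw [hsum, hσswt, hσmwt]
  have : X.weight ρ • vY σs + X.weight ρ • vY σm = X.weight ρ • (vY σm + vY σs) := by
    rw [smul_add]
    abel
  rw [this, toReal_intsmul]
  exact Submodule.smul_mem _ _ hopp

end CaseA

/-- If `(X, ω_X)` is a weighted fan of dimension `k` in `V` and
`(Y, ω_Y)` is a refinement of `(X, ω_X)`, then `X` is a tropical fan (satisfies the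
balancing condition) if and only if `Y` is one. -/
theorem refinement_tropical_iff {N : ℕ} (X Y : WComplex N)
    (hX : X.IsFan) (hY : Y.IsFan) (hdim : Y.dim = X.dim) (h : Refines Y X) :
    X.IsTropical ↔ Y.IsTropical := by
  classical
  constructor
  · -- X tropical ⟹ Y tropical
    intro hXtrop τ hτ hdτ'
    have hdτ : polyDim τ + 1 = X.dim := by rw [← hdim]; exact hdτ'
    -- choose a family of primitive normal vectors
    set vY : Set (Fin N → ℝ) → (Fin N → ℤ) :=
      fun σ => if hσ : ∃ w, IsPrimitiveNormal τ σ w then hσ.choose else 0 with hvYdef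
    have hvY : ∀ σ ∈ Y.facetsAbove τ, IsPrimitiveNormal τ σ (vY σ) := by
      intro σ hσ
      obtain ⟨hσp, hσd, hτσ, hτne⟩ := WComplex.mem_facetsAbove.1 hσ
      have hex : ∃ w, IsPrimitiveNormal τ σ w := by
        obtain ⟨w, l, hPN, -⟩ := WComplex.exists_primitive_normal hY hτ hσp hτσ hτne
          (by omega)
        exact ⟨w, hPN⟩
      simp only [hvYdef]
      rw [dif_pos hex]
      exact hex.choose_spec
    refine ⟨vY, hvY, ?_⟩
    by_cases hstar : τ ∈ Y.starPolys
    · -- pick a generic relative interior point of τ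
      set bad : Finset (Set (Fin N → ℝ)) :=
        X.finite.toFinset.filter (fun C => polyDim C < polyDim τ) with hbad
      obtain ⟨x0, hx0τ, hx0avoid⟩ := exists_generic_relint (hY τ hτ).convex
        (Y.nonempty_mem τ hτ) bad (by
          intro C hC
          rw [hbad, Finset.mem_filter, Set.Finite.mem_toFinset] at hC
          exact ⟨(hX C hC.1).convex, hC.2⟩)
      have hx0sup : x0 ∈ X.starSupport := by
        have hmem : x0 ∈ Y.starSupport := ⟨τ, hstar, intrinsicInterior_subset hx0τ⟩
        rwa [h.2.1] at hmem
      obtain ⟨D, hDstar, hx0D⟩ := hx0sup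
      obtain ⟨ρ, ⟨hρp, hρD, hx0ρ⟩, -⟩ := X.decomp D hDstar.1 x0 hx0D
      have hρnotbad : ¬ polyDim ρ < polyDim τ := by
        intro hlt
        apply hx0avoid ρ ?_ (intrinsicInterior_subset hx0ρ)
        rw [hbad, Finset.mem_filter, Set.Finite.mem_toFinset]
        exact ⟨hρp, hlt⟩
      have hρd : polyDim ρ ≤ X.dim := (X.pure ρ hρp).1
      by_cases hcase : polyDim ρ = X.dim
      · exact caseA hX hY hdim h hτ hρp hstar hx0τ hx0ρ hdτ hcase hvY
      · have hdρ : polyDim ρ + 1 = X.dim := by omega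
        have hVeq := veq hX hY h hτ hρp hstar hx0τ hx0ρ hdτ hdρ
        obtain ⟨vX, hvX, hbalX⟩ := hXtrop ρ hρp hdρ
        have hdiff := core_transfer hX hY hdim h hτ hρp hstar hx0τ hx0ρ hdτ hdρ hVeq hvY hvX
        have hX' : toReal (∑ ν ∈ X.facetsAbove ρ, X.weight ν • vX ν) ∈ vectorSpan ℝ τ := by
          rw [hVeq]
          exact hbalX
        have hfinal := Submodule.add_mem _ hdiff hX'
        rwa [sub_add_cancel] at hfinal
    · -- all facets above τ have weight zero
      have hzero : ∀ σ ∈ Y.facetsAbove τ, Y.weight σ = 0 := by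
        intro σ hσ
        by_contra hw
        obtain ⟨hσp, hσd, hτσ, hτne⟩ := WComplex.mem_facetsAbove.1 hσ
        exact hstar ⟨hτ, σ, hσp, hσd, hw, hτσ⟩
      have hsum : ∑ σ ∈ Y.facetsAbove τ, Y.weight σ • vY σ = 0 :=
        Finset.sum_eq_zero fun σ hσ => by rw [hzero σ hσ, zero_smul]
      rw [hsum, toReal_zero]
      exact Submodule.zero_mem _
  · -- Y tropical ⟹ X tropical
    intro hYtrop μ hμ hdμ
    set vX : Set (Fin N → ℝ) → (Fin N → ℤ) :=
      fun σ => if hσ : ∃ w, IsPrimitiveNormal μ σ w then hσ.choose else 0 with hvXdef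
    have hvX : ∀ ν ∈ X.facetsAbove μ, IsPrimitiveNormal μ ν (vX ν) := by
      intro ν hν
      obtain ⟨hνp, hνd, hμν, hμne⟩ := WComplex.mem_facetsAbove.1 hν
      have hex : ∃ w, IsPrimitiveNormal μ ν w := by
        obtain ⟨w, l, hPN, -⟩ := WComplex.exists_primitive_normal hX hμ hνp hμν hμne
          (by omega)
        exact ⟨w, hPN⟩
      simp only [hvXdef]
      rw [dif_pos hex]
      exact hex.choose_spec
    refine ⟨vX, hvX, ?_⟩
    by_cases hstar : μ ∈ X.starPolys
    · -- pick a generic relative interior point of μ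
      set bad : Finset (Set (Fin N → ℝ)) :=
        Y.finite.toFinset.filter (fun C => polyDim C < polyDim μ) with hbad
      obtain ⟨x0, hx0μ, hx0avoid⟩ := exists_generic_relint (hX μ hμ).convex
        (X.nonempty_mem μ hμ) bad (by
          intro C hC
          rw [hbad, Finset.mem_filter, Set.Finite.mem_toFinset] at hC
          exact ⟨(hY C hC.1).convex, hC.2⟩)
      have hx0μ' : x0 ∈ μ := intrinsicInterior_subset hx0μ
      have hx0sup : x0 ∈ Y.starSupport := by
        have hmem : x0 ∈ X.starSupport := ⟨μ, hstar, hx0μ'⟩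
        rwa [← h.2.1] at hmem
      obtain ⟨C0, hC0star, hx0C0⟩ := hx0sup
      obtain ⟨τ, ⟨hτp, hτC0, hx0τ⟩, -⟩ := Y.decomp C0 hC0star.1 x0 hx0C0
      have hx0τ' : x0 ∈ τ := intrinsicInterior_subset hx0τ
      have hτstar : τ ∈ Y.starPolys := by
        obtain ⟨hC0p, σ', hσ'p, hσ'd, hσ'w, hC0σ'⟩ := hC0star
        exact ⟨hτp, σ', hσ'p, hσ'd, hσ'w, hτC0.trans hC0σ'⟩
      have hτnotbad : ¬ polyDim τ < polyDim μ := by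
        intro hlt
        apply hx0avoid τ ?_ hx0τ'
        rw [hbad, Finset.mem_filter, Set.Finite.mem_toFinset]
        exact ⟨hτp, hlt⟩
      have hτd_le : polyDim τ ≤ Y.dim := (Y.pure τ hτp).1
      -- the dimension of τ is exactly polyDim μ
      have hτdim : polyDim τ + 1 = X.dim := by
        rw [hdim] at hτd_le
        by_contra hne'
        have hτk : polyDim τ = X.dim := by omega
        -- derive a contradiction: x0 would be interior to a facet of X
        obtain ⟨D, hDstar, hτD⟩ := h.1 τ hτstar
        have hx0D : x0 ∈ D := hτD hx0τ'
        have hμD : μ ⊆ D := WComplex.min_cone hμ hDstar.1 hx0μ hx0D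
        have hDd : polyDim D ≤ X.dim := (X.pure D hDstar.1).1
        have hτDd : polyDim τ ≤ polyDim D :=
          Submodule.finrank_mono (vectorSpan_mono ℝ hτD)
        have hVτD : vectorSpan ℝ τ = vectorSpan ℝ D := by
          apply Submodule.eq_of_le_of_finrank_le (vectorSpan_mono ℝ hτD)
          show polyDim D ≤ polyDim τ
          omega
        have hx0Dii : x0 ∈ intrinsicInterior ℝ D := by
          apply relint_mono_of_affineSpan_eq hτD ?_ hx0τ
          rw [affineSpan_coe_eq (hY τ hτp).zero_mem,
            affineSpan_coe_eq (hX D hDstar.1).zero_mem, hVτD]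
        obtain ⟨η, -, huniq⟩ := X.decomp D hDstar.1 x0 hx0D
        have h1 : μ = η := huniq μ ⟨hμ, hμD, hx0μ⟩
        have h2 : D = η := huniq D ⟨hDstar.1, subset_rfl, hx0Dii⟩
        have hμDeq : μ = D := h1.trans h2.symm
        have : polyDim μ = polyDim D := by rw [hμDeq]
        omega
      have hVeq := veq hX hY h hτp hμ hτstar hx0τ hx0μ hτdim hdμ
      obtain ⟨vY, hvY, hbalY⟩ := hYtrop τ hτp (by rw [hdim]; exact hτdim)
      have hdiff := core_transfer hX hY hdim h hτp hμ hτstar hx0τ hx0μ hτdim hdμ hVeq hvY hvX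
      rw [← hVeq]
      have hfinal := Submodule.sub_mem _ hbalY hdiff
      rwa [sub_sub_cancel] at hfinal
    · -- all facets above μ have weight zero
      have hzero : ∀ ν ∈ X.facetsAbove μ, X.weight ν = 0 := by
        intro ν hν
        by_contra hw
        obtain ⟨hνp, hνd, hμν, hμne⟩ := WComplex.mem_facetsAbove.1 hν
        exact hstar ⟨hμ, ν, hνp, hνd, hw, hμν⟩
      have hsum : ∑ ν ∈ X.facetsAbove μ, X.weight ν • vX ν = 0 :=
        Finset.sum_eq_zero fun ν hν => by rw [hzero ν hν, zero_smul]
      rw [hsum, toReal_zero]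
      exact Submodule.zero_mem _

end TropInt
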